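/- arXiv:1304.2699 — 7 statements merged into one kernel-verified Lean document; each statement's English description precedes it below -/
import Mathlib

section
/- For every r, n ∈ ℕ (r, n ≥ 1), the number ρ_r(n) of ordered r-tuples (k_1,…,k_r) ∈ {1,…,n}^r such that gcd(k_1,…,k_r) is regular (mod n) satisfies ρ_r(n) = Σ_{d || n} φ_r(d), where the sum runs over the unitary divisors d of n. -/
open Finset
open scoped Classical

/-- `k` is regular (mod `n`): there is an integer `x` with `k² x ≡ k (mod n)`. -/
def IsRegularMod (k n : ℕ) : Prop := ∃ x : ℤ, (n : ℤ) ∣ (k : ℤ) ^ 2 * x - (k : ℤ)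

/-- The unitary divisors of `n`: divisors `d` of `n` with `gcd(d, n/d) = 1`. -/
def unitaryDivisors (n : ℕ) : Finset ℕ := n.divisors.filter fun d => Nat.Coprime d (n / d)

/-- The Jordan function `φ_r(n)`: the number of `r`-tuples
`(k_1,…,k_r) ∈ {1,…,n}^r` with `gcd(k_1,…,k_r)` coprime to `n`. -/
noncomputable def jordanPhi (r n : ℕ) : ℕ :=
  ((Fintype.piFinset fun _ : Fin r => Finset.Icc 1 n).filter
    fun t => Nat.Coprime (Finset.univ.gcd t) n).card

/-- `ρ_r(n)`: the number of `r`-tuples `(k_1,…,k_r) ∈ {1,…,n}^r`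
with `gcd(k_1,…,k_r)` regular (mod `n`). -/
noncomputable def rhoR (r n : ℕ) : ℕ :=
  ((Fintype.piFinset fun _ : Fin r => Finset.Icc 1 n).filter
    fun t => IsRegularMod (Finset.univ.gcd t) n).card

lemma isRegular_iff_dvd (k n : ℕ) : IsRegularMod k n ↔ Nat.gcd (k ^ 2) n ∣ k := by
  constructor
  · rintro ⟨x, hx⟩
    have hg : ((Nat.gcd (k ^ 2) n : ℕ) : ℤ) ∣ (k : ℤ) := by
      have h1 : ((Nat.gcd (k ^ 2) n : ℕ) : ℤ) ∣ (k : ℤ) ^ 2 * x := by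
        refine Dvd.dvd.mul_right ?_ x
        have := Int.natCast_dvd_natCast.mpr (Nat.gcd_dvd_left (k ^ 2) n)
        push_cast at this; exact this
      have h2 : ((Nat.gcd (k ^ 2) n : ℕ) : ℤ) ∣ (k : ℤ) ^ 2 * x - k :=
        (Int.natCast_dvd_natCast.mpr (Nat.gcd_dvd_right (k ^ 2) n)).trans hx
      have := dvd_sub h1 h2
      simpa using this
    exact_mod_cast hg
  · rintro ⟨c, hc⟩
    refine ⟨(Nat.gcdA (k ^ 2) n) * c, ⟨-(Nat.gcdB (k ^ 2) n * c), ?_⟩⟩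
    have hb := Nat.gcd_eq_gcd_ab (k ^ 2) n
    have hk : (k : ℤ) = ((Nat.gcd (k ^ 2) n : ℕ) : ℤ) * c := by exact_mod_cast hc
    have hc2 : ((k ^ 2 : ℕ) : ℤ) = (k : ℤ) ^ 2 := by push_cast; ring
    linear_combination (-1 : ℤ) * hk + (-(c : ℤ)) * hb + (-(Nat.gcdA (k ^ 2) n * (c : ℤ))) * hc2

lemma regular_iff_mem (k n : ℕ) (hn : 0 < n) :
    IsRegularMod k n ↔ Nat.gcd k n ∈ unitaryDivisors n := by
  set e := Nat.gcd k n with he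
  have he_dvd : e ∣ n := Nat.gcd_dvd_right k n
  have he_pos : 0 < e := Nat.gcd_pos_of_pos_right k hn
  rw [isRegular_iff_dvd]
  have h1 : Nat.gcd (k ^ 2) n ∣ k ↔ Nat.gcd (k ^ 2) n = e := by
    constructor
    · intro h
      exact Nat.dvd_antisymm (Nat.dvd_gcd h (Nat.gcd_dvd_right _ _))
        (Nat.dvd_gcd ((Nat.gcd_dvd_left k n).trans (dvd_pow_self k two_ne_zero))
          (Nat.gcd_dvd_right k n))
    · intro h; rw [h]; exact Nat.gcd_dvd_left k n
  have h2 : Nat.gcd (k ^ 2) n = Nat.gcd (e ^ 2) n := by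
    apply Nat.dvd_antisymm
    · refine Nat.dvd_gcd ?_ (Nat.gcd_dvd_right _ _)
      exact gcd_pow_left_dvd_pow_gcd
    · refine Nat.dvd_gcd ?_ (Nat.gcd_dvd_right _ _)
      exact (Nat.gcd_dvd_left _ _).trans (pow_dvd_pow_of_dvd (Nat.gcd_dvd_left k n) 2)
  have h3 : Nat.gcd (e ^ 2) n = e * Nat.gcd e (n / e) := by
    conv_lhs => rw [← Nat.mul_div_cancel' he_dvd, pow_two, Nat.gcd_mul_left]
  have h4 : (Nat.gcd (k ^ 2) n ∣ k) ↔ Nat.gcd e (n / e) = 1 := by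
    rw [h1, h2, h3]
    constructor
    · intro h
      exact Nat.eq_of_mul_eq_mul_left he_pos (by simpa using h)
    · intro h; simp [h]
  rw [h4]
  simp [unitaryDivisors, Nat.mem_divisors, he_dvd, hn.ne', Nat.Coprime]

lemma fiber_card (r n e : ℕ) (he : e ∣ n) (he0 : 0 < e) :
    ((Fintype.piFinset fun _ : Fin r => Finset.Icc 1 n).filter
      fun t => Nat.gcd (Finset.univ.gcd t) n = e).card = jordanPhi r (n / e) := by
  rw [jordanPhi]
  apply Finset.card_nbij' (i := fun t i => t i / e) (j := fun s i => e * s i)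
  · intro t ht
    rw [Finset.mem_coe, Finset.mem_filter, Fintype.mem_piFinset] at ht ⊢
    obtain ⟨ht1, ht2⟩ := ht
    have hdvd : ∀ i, e ∣ t i := fun i => (ht2 ▸ Nat.gcd_dvd_left _ n).trans
      (Finset.gcd_dvd (Finset.mem_univ i))
    constructor
    · intro i
      have h1 := (Finset.mem_Icc.mp (ht1 i)).1
      have h2 := (Finset.mem_Icc.mp (ht1 i)).2
      rw [Finset.mem_Icc]
      exact ⟨(Nat.one_le_div_iff he0).mpr (Nat.le_of_dvd h1 (hdvd i)),
        Nat.div_le_div_right h2⟩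
    · have hteq : t = fun i => e * (t i / e) := by
        funext i; rw [Nat.mul_div_cancel' (hdvd i)]
      have hg : Finset.univ.gcd t = e * Finset.univ.gcd (fun i => t i / e) := by
        conv_lhs => rw [hteq]
        rw [Finset.gcd_mul_left]; simp
      rw [hg, ← Nat.mul_div_cancel' he, Nat.gcd_mul_left] at ht2
      have h5 : e * Nat.gcd (Finset.univ.gcd fun i => t i / e) (n / e) = e * 1 := by
        rw [mul_one]; exact ht2
      exact Nat.eq_of_mul_eq_mul_left he0 h5
  · intro s hs
    rw [Finset.mem_coe, Finset.mem_filter, Fintype.mem_piFinset] at hs ⊢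
    obtain ⟨hs1, hs2⟩ := hs
    constructor
    · intro i
      have h1 := (Finset.mem_Icc.mp (hs1 i)).1
      have h2 := (Finset.mem_Icc.mp (hs1 i)).2
      rw [Finset.mem_Icc]
      refine ⟨Nat.one_le_iff_ne_zero.mpr (by positivity), ?_⟩
      calc e * s i ≤ e * (n / e) := Nat.mul_le_mul_left e h2
        _ = n := Nat.mul_div_cancel' he
    · have hg : Finset.univ.gcd (fun i => e * s i) = e * Finset.univ.gcd s := by
        rw [Finset.gcd_mul_left]; simp
      rw [hg]
      conv_lhs => rw [← Nat.mul_div_cancel' he]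
      rw [Nat.gcd_mul_left, hs2, mul_one]
  · intro t ht
    rw [Finset.mem_coe, Finset.mem_filter] at ht
    have hdvd : ∀ i, e ∣ t i := fun i => (ht.2 ▸ Nat.gcd_dvd_left _ n).trans
      (Finset.gcd_dvd (Finset.mem_univ i))
    funext i
    exact Nat.mul_div_cancel' (hdvd i)
  · intro s _
    funext i
    exact Nat.mul_div_cancel_left _ he0

lemma div_mem_unitaryDivisors {n d : ℕ} (hd : d ∈ unitaryDivisors n) :
    n / d ∈ unitaryDivisors n := by
  rw [unitaryDivisors, Finset.mem_filter, Nat.mem_divisors] at hd ⊢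
  obtain ⟨⟨hdn, hne⟩, hcop⟩ := hd
  refine ⟨⟨Nat.div_dvd_of_dvd hdn, hne⟩, ?_⟩
  rw [Nat.div_div_self hdn hne]
  exact hcop.symm

theorem rhoR_eq_sum_unitaryDivisors_jordanPhi (r n : ℕ) (hr : 1 ≤ r) (hn : 1 ≤ n) :
    rhoR r n = ∑ d ∈ unitaryDivisors n, jordanPhi r d := by
  have hn0 : 0 < n := hn
  rw [rhoR]
  have hset : ((Fintype.piFinset fun _ : Fin r => Finset.Icc 1 n).filter
      fun t => IsRegularMod (Finset.univ.gcd t) n)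
      = ((Fintype.piFinset fun _ : Fin r => Finset.Icc 1 n).filter
      fun t => Nat.gcd (Finset.univ.gcd t) n ∈ unitaryDivisors n) := by
    apply Finset.filter_congr
    intro t _
    exact regular_iff_mem _ n hn0
  rw [hset, Finset.card_eq_sum_card_fiberwise
    (f := fun t => Nat.gcd (Finset.univ.gcd t) n) (t := unitaryDivisors n)
    (s := (Fintype.piFinset fun _ : Fin r => Finset.Icc 1 n).filter
      fun t => Nat.gcd (Finset.univ.gcd t) n ∈ unitaryDivisors n)
    (fun t ht => (Finset.mem_filter.mp ht).2)]
  have hterm : ∀ e ∈ unitaryDivisors n,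
      (((Fintype.piFinset fun _ : Fin r => Finset.Icc 1 n).filter
        fun t => Nat.gcd (Finset.univ.gcd t) n ∈ unitaryDivisors n).filter
        fun t => Nat.gcd (Finset.univ.gcd t) n = e).card = jordanPhi r (n / e) := by
    intro e heU
    have hed : e ∣ n := (Nat.mem_divisors.mp (Finset.mem_filter.mp heU).1).1
    have he0 : 0 < e := Nat.pos_of_mem_divisors (Finset.mem_filter.mp heU).1
    rw [Finset.filter_filter,
      Finset.filter_congr (fun t _ => show (_ ∧ _) ↔ _ from
        ⟨fun h => h.2, fun h => ⟨by rw [h]; exact heU, h⟩⟩)]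
    exact fiber_card r n e hed he0
  rw [Finset.sum_congr rfl hterm]
  refine Finset.sum_nbij' (i := fun d => n / d) (j := fun d => n / d)
    (fun d hd => div_mem_unitaryDivisors hd) (fun d hd => div_mem_unitaryDivisors hd)
    ?_ ?_ (fun d hd => rfl)
  · intro d hd
    have h := (Nat.mem_divisors.mp (Finset.mem_filter.mp hd).1)
    exact Nat.div_div_self h.1 h.2
  · intro d hd
    have h := (Nat.mem_divisors.mp (Finset.mem_filter.mp hd).1)
    exact Nat.div_div_self h.1 h.2
end

section
/- Let w : ℕ² → ℂ and f : ℕ → ℂ be arbitrary functions. For every n ∈ ℕ, Σ_{k ∈ Reg_n} w(k,n) f(gcd(k,n)) = Σ_{d || n} f(d) · Σ_{1 ≤ j ≤ n/d, gcd(j, n/d)=1} w(dj, n), where the outer sum on the right runs over the unitary divisors d of n. -/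
open Finset
open scoped Classical

/-- `Reg_n`, the set of `k ∈ {1,…,n}` that are regular (mod `n`). -/
noncomputable def Reg (n : ℕ) : Finset ℕ :=
  (Finset.Icc 1 n).filter fun k => IsRegularMod k n

lemma reg_iff {n k : ℕ} (hn : 0 < n) :
    IsRegularMod k n ↔ Nat.Coprime k (n / Nat.gcd k n) := by
  rcases Nat.eq_zero_or_pos k with rfl | hk
  · simp [IsRegularMod, Nat.Coprime, Nat.div_self hn]
  set d := Nat.gcd k n with hd
  have hdk : d ∣ k := Nat.gcd_dvd_left k n
  have hdn : d ∣ n := Nat.gcd_dvd_right k n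
  have hdpos : 0 < d := Nat.gcd_pos_of_pos_left n hk
  set m := n / d with hm
  have hnm : n = d * m := (Nat.mul_div_cancel' hdn).symm
  constructor
  · rintro ⟨x, hx⟩
    have h1 : (n : ℤ) ∣ (k : ℤ) * ((k : ℤ) * x - 1) := by
      have : (k : ℤ) * ((k : ℤ) * x - 1) = (k : ℤ) ^ 2 * x - k := by ring
      rw [this]; exact hx
    -- let g = gcd k m, show g = 1
    set g := Nat.gcd k m with hg
    have hgk : g ∣ k := Nat.gcd_dvd_left k m
    have hgm : g ∣ m := Nat.gcd_dvd_right k m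
    -- coprime g (k*x - 1) over ℤ
    obtain ⟨t, ht⟩ : (g : ℤ) ∣ (k : ℤ) * x := Dvd.dvd.mul_right (Int.natCast_dvd_natCast.2 hgk) x
    have hcop : IsCoprime (g : ℤ) ((k : ℤ) * x - 1) := by
      refine ⟨t, -1, ?_⟩
      rw [ht]; ring
    -- d*g ∣ n ∣ k*(kx-1), and k = d*a
    obtain ⟨a, ha⟩ := hdk
    have hdvd : (d : ℤ) * g ∣ (d : ℤ) * (a * ((k : ℤ) * x - 1)) := by
      have h2 : (d : ℤ) * g ∣ (n : ℤ) := by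
        exact_mod_cast Nat.mul_dvd_mul_left d hgm |>.trans (by rw [← hnm])
      refine h2.trans ?_
      calc (n:ℤ) ∣ (k : ℤ) * ((k : ℤ) * x - 1) := h1
        _ = (d : ℤ) * (a * ((k : ℤ) * x - 1)) := by push_cast [ha]; ring
    have hga : (g : ℤ) ∣ a * ((k : ℤ) * x - 1) :=
      (mul_dvd_mul_iff_left (by exact_mod_cast hdpos.ne' : (d:ℤ) ≠ 0)).1 hdvd
    have hga2 : (g : ℤ) ∣ (a : ℤ) := hcop.dvd_of_dvd_mul_right (mul_comm (a:ℤ) _ ▸ hga)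
    have hga3 : g ∣ a := Int.natCast_dvd_natCast.1 hga2
    have hdgk : d * g ∣ k := by rw [ha]; exact Nat.mul_dvd_mul_left d hga3
    have hdgn : d * g ∣ n := by rw [hnm]; exact Nat.mul_dvd_mul_left d hgm
    have : d * g ∣ d := Nat.dvd_gcd hdgk hdgn
    have hg1 : g ∣ 1 := (Nat.mul_dvd_mul_iff_left hdpos).1 (by simpa using this)
    exact Nat.eq_one_of_dvd_one hg1
  · intro hcop
    have : IsCoprime (k : ℤ) (m : ℤ) := by exact_mod_cast Nat.isCoprime_iff_coprime.2 hcop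
    obtain ⟨u, v, huv⟩ := this
    refine ⟨u, ?_⟩
    have hmd : (m : ℤ) ∣ (k : ℤ) * u - 1 := ⟨-v, by linarith [huv]⟩
    have : (n : ℤ) = (d : ℤ) * m := by exact_mod_cast hnm
    rw [this]
    have hdk' : (d : ℤ) ∣ (k : ℤ) := Int.natCast_dvd_natCast.2 hdk
    have : (k : ℤ) ^ 2 * u - k = (k : ℤ) * ((k : ℤ) * u - 1) := by ring
    rw [this]
    exact mul_dvd_mul hdk' hmd

theorem sum_reg_weighted (w : ℕ → ℕ → ℂ) (f : ℕ → ℂ) (n : ℕ) (hn : 1 ≤ n) :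
    ∑ k ∈ Reg n, w k n * f (Nat.gcd k n) =
      ∑ d ∈ unitaryDivisors n, f d *
        ∑ j ∈ (Finset.Icc 1 (n / d)).filter fun j => Nat.Coprime j (n / d), w (d * j) n := by
  have hn0 : 0 < n := hn
  have hrw : ∀ d ∈ unitaryDivisors n, f d *
        ∑ j ∈ (Finset.Icc 1 (n / d)).filter (fun j => Nat.Coprime j (n / d)), w (d * j) n
      = ∑ j ∈ (Finset.Icc 1 (n / d)).filter (fun j => Nat.Coprime j (n / d)),
          f d * w (d * j) n := fun d _ => Finset.mul_sum _ _ _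
  rw [Finset.sum_congr rfl hrw, Finset.sum_sigma']
  refine Finset.sum_nbij' (fun k => ⟨Nat.gcd k n, k / Nat.gcd k n⟩)
    (fun p => p.1 * p.2) ?_ ?_ ?_ ?_ ?_
  · rintro k hk
    simp only [Reg, Finset.mem_filter, Finset.mem_Icc] at hk
    obtain ⟨⟨hk1, hkn⟩, hreg⟩ := hk
    set d := Nat.gcd k n with hd
    have hdk : d ∣ k := Nat.gcd_dvd_left k n
    have hdn : d ∣ n := Nat.gcd_dvd_right k n
    have hdpos : 0 < d := Nat.gcd_pos_of_pos_left n hk1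
    have hcopkm : Nat.Coprime k (n / d) := (reg_iff hn0).1 hreg
    have hcopdm : Nat.Coprime d (n / d) := Nat.Coprime.coprime_dvd_left hdk hcopkm
    simp only [Finset.mem_sigma, unitaryDivisors, Finset.mem_filter, Nat.mem_divisors,
      Finset.mem_Icc]
    refine ⟨⟨⟨hdn, hn0.ne'⟩, hcopdm⟩, ⟨Nat.one_le_div_iff hdpos |>.2 (Nat.le_of_dvd hk1 hdk),
      Nat.div_le_div_right hkn⟩, ?_⟩
    exact Nat.coprime_div_gcd_div_gcd hdpos
  · rintro ⟨d, j⟩ hp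
    simp only [Finset.mem_sigma, unitaryDivisors, Finset.mem_filter, Nat.mem_divisors,
      Finset.mem_Icc] at hp
    obtain ⟨⟨⟨hdn, -⟩, hcd⟩, ⟨hj1, hjm⟩, hcj⟩ := hp
    have hdpos : 0 < d := Nat.pos_of_dvd_of_pos hdn hn0
    have hgcd : Nat.gcd (d * j) n = d := by
      conv_lhs => rw [← Nat.mul_div_cancel' hdn]
      rw [Nat.gcd_mul_left, Nat.Coprime.gcd_eq_one hcj, mul_one]
    simp only [Reg, Finset.mem_filter, Finset.mem_Icc]
    refine ⟨⟨Nat.one_le_iff_ne_zero.2 (by positivity), ?_⟩, ?_⟩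
    · calc d * j ≤ d * (n / d) := Nat.mul_le_mul_left d hjm
        _ = n := Nat.mul_div_cancel' hdn
    · rw [reg_iff hn0, hgcd]
      exact hcd.mul hcj
  · intro k hk
    simp only [Reg, Finset.mem_filter, Finset.mem_Icc] at hk
    exact Nat.mul_div_cancel' (Nat.gcd_dvd_left k n)
  · rintro ⟨d, j⟩ hp
    simp only [Finset.mem_sigma, unitaryDivisors, Finset.mem_filter, Nat.mem_divisors,
      Finset.mem_Icc] at hp
    obtain ⟨⟨⟨hdn, -⟩, hcd⟩, ⟨hj1, hjm⟩, hcj⟩ := hp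
    have hdpos : 0 < d := Nat.pos_of_dvd_of_pos hdn hn0
    have hgcd : Nat.gcd (d * j) n = d := by
      conv_lhs => rw [← Nat.mul_div_cancel' hdn]
      rw [Nat.gcd_mul_left, Nat.Coprime.gcd_eq_one hcj, mul_one]
    simp [hgcd, Nat.mul_div_cancel_left j hdpos]
  · intro k hk
    simp only [Reg, Finset.mem_filter, Finset.mem_Icc] at hk
    rw [Nat.mul_div_cancel' (Nat.gcd_dvd_left k n), mul_comm]
end

section
/- For every n, r ∈ ℕ (n, r ≥ 1), Σ_{k ∈ Reg_n} k^r = n^r/2 + (n^r/(r+1)) · Σ_{m=0}^{⌊r/2⌋} C(r+1, 2m) B_{2m} ρ_{1−2m}(n), where ρ_{1−2m}(n) = n^{1−2m} Π_{p^ν || n} (p^{(2m−1)ν} − p^{2m−1} + 1), the product running over the prime powers p^ν exactly dividing n (i.e., p^ν | n and p^{ν+1} ∤ n). -/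
open Finset ArithmeticFunction
open scoped Classical
open scoped ArithmeticFunction.Moebius

/-- `ρ_{1-2m}(n) = n^{1-2m} ∏_{p^ν ∥ n} (p^{(2m-1)ν} - p^{2m-1} + 1)`,
the product running over the prime powers `p^ν` exactly dividing `n`. -/
noncomputable def rhoOneSubTwoM (m n : ℕ) : ℝ :=
  (n : ℝ) ^ ((1 : ℤ) - 2 * m) *
    ∏ p ∈ n.primeFactors,
      ((p : ℝ) ^ ((2 * (m : ℤ) - 1) * (n.factorization p : ℤ)) -
        (p : ℝ) ^ (2 * (m : ℤ) - 1) + 1)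


private lemma isRegularMod_iff {k n : ℕ} : IsRegularMod k n ↔ Nat.gcd (k ^ 2) n ∣ k := by
  constructor
  · rintro ⟨x, hx⟩
    have h1 : ((Nat.gcd (k ^ 2) n : ℕ) : ℤ) ∣ (k : ℤ) ^ 2 := by
      have := Nat.gcd_dvd_left (k ^ 2) n
      exact_mod_cast this
    have h2 : ((Nat.gcd (k ^ 2) n : ℕ) : ℤ) ∣ (n : ℤ) :=
      Int.natCast_dvd_natCast.mpr (Nat.gcd_dvd_right _ _)
    have : ((Nat.gcd (k ^ 2) n : ℕ) : ℤ) ∣ (k : ℤ) := by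
      have := dvd_sub (h1.mul_right x) (h2.trans hx)
      simpa using this
    exact_mod_cast this
  · rintro ⟨c, hc⟩
    set g := Nat.gcd (k ^ 2) n with hg
    have hb := Int.gcd_eq_gcd_ab ((k : ℤ) ^ 2) (n : ℤ)
    have hgi : (Int.gcd ((k : ℤ) ^ 2) (n : ℤ) : ℤ) = (g : ℤ) := by
      rw [hg]; norm_cast
    refine ⟨Int.gcdA ((k : ℤ) ^ 2) (n : ℤ) * c, -(Int.gcdB ((k : ℤ) ^ 2) (n : ℤ) * c), ?_⟩
    have hck : (k : ℤ) = (g : ℤ) * c := by exact_mod_cast hc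
    rw [hgi] at hb
    linear_combination -(c : ℤ) * hb - hck

private lemma moebius_sum_divisors (d : ℕ) :
    ∑ e ∈ d.divisors, ((μ e : ℤ) : ℝ) = if d = 1 then 1 else 0 := by
  have h := congrArg (fun f : ArithmeticFunction ℤ => f d) moebius_mul_coe_zeta
  simp only [coe_mul_zeta_apply, one_apply] at h
  have : ((∑ e ∈ d.divisors, μ e : ℤ) : ℝ) = ((if d = 1 then 1 else 0 : ℤ) : ℝ) := by
    exact_mod_cast congrArg (fun z : ℤ => (z : ℝ)) h
  push_cast at this
  simpa using this

private lemma faulhaber_real (x p : ℕ) :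
    ∑ j ∈ Icc 1 x, (j : ℝ) ^ p =
      ∑ i ∈ range (p + 1),
        ((bernoulli' i : ℚ) : ℝ) * ((p + 1).choose i : ℝ) * (x : ℝ) ^ (p + 1 - i) / ((p : ℝ) + 1) := by
  have h := sum_Ico_pow x p
  have h2 := congrArg (fun q : ℚ => (q : ℝ)) h
  push_cast at h2
  rw [← Finset.Ico_add_one_right_eq_Icc]
  convert h2 using 2


-- fiber of gcd on Reg n
private lemma fiber_eq (n d : ℕ) (hn : 0 < n) (hd : d ∣ n) (hcop : Nat.Coprime d (n / d)) :
    (Reg n).filter (fun k => Nat.gcd k n = d) =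
      ((Icc 1 (n / d)).filter fun j => Nat.Coprime j (n / d)).image (fun j => d * j) := by
  have hd0 : 0 < d := Nat.pos_of_dvd_of_pos hd hn
  have hdm : d * (n / d) = n := Nat.mul_div_cancel' hd
  set m := n / d with hm
  ext k
  simp only [Reg, mem_filter, mem_image, mem_Icc]
  constructor
  · rintro ⟨⟨⟨hk1, hkn⟩, hreg⟩, hgcd⟩
    have hdk : d ∣ k := hgcd ▸ Nat.gcd_dvd_left k n
    obtain ⟨j, hj⟩ := hdk
    have hj0 : 0 < j := by
      rcases Nat.eq_zero_or_pos j with rfl | h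
      · rw [mul_zero] at hj; omega
      · exact h
    have hjm : j ≤ m := by
      have h' : d * j ≤ d * m := by rw [← hj, hdm]; exact hkn
      exact Nat.le_of_mul_le_mul_left h' hd0
    have hcj : Nat.Coprime j m := by
      have : Nat.gcd (d * j) (d * m) = d := by rw [← hj, hdm]; exact hgcd
      rw [Nat.gcd_mul_left] at this
      have h'' : d * Nat.gcd j m = d * 1 := by rw [mul_one]; exact this
      exact Nat.eq_of_mul_eq_mul_left hd0 h''
    exact ⟨j, ⟨⟨hj0, hjm⟩, hcj⟩, hj.symm⟩
  · rintro ⟨j, ⟨⟨hj1, hjm⟩, hcj⟩, rfl⟩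
    have hm0 : 0 < m := lt_of_lt_of_le hj1 hjm
    refine ⟨⟨⟨?_, ?_⟩, ?_⟩, ?_⟩
    · exact Nat.one_le_iff_ne_zero.mpr (by positivity)
    · calc d * j ≤ d * m := Nat.mul_le_mul_left d hjm
        _ = n := hdm
    · rw [isRegularMod_iff]
      have hg : Nat.gcd ((d * j) ^ 2) n = d := by
        have : (d * j) ^ 2 = d * (d * j ^ 2) := by ring
        rw [this, ← hdm, Nat.gcd_mul_left]
        have hc1 : Nat.Coprime (d * j ^ 2) m := (hcop.mul (hcj.pow_left 2))
        rw [hc1]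
        exact mul_one d
      rw [hg]
      exact Dvd.intro j rfl
    · rw [← hdm, Nat.gcd_mul_left, hcj.gcd_eq_one, mul_one]
  
private lemma fiber_empty (n d : ℕ) (hn : 0 < n) (hd : d ∣ n)
    (hcop : ¬ Nat.Coprime d (n / d)) :
    (Reg n).filter (fun k => Nat.gcd k n = d) = ∅ := by
  have hd0 : 0 < d := Nat.pos_of_dvd_of_pos hd hn
  have hdm : d * (n / d) = n := Nat.mul_div_cancel' hd
  rw [Finset.eq_empty_iff_forall_notMem]
  rintro k hk
  simp only [Reg, mem_filter, mem_Icc] at hk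
  obtain ⟨⟨⟨hk1, hkn⟩, hreg⟩, hgcd⟩ := hk
  rw [isRegularMod_iff] at hreg
  rw [Nat.Prime.not_coprime_iff_dvd] at hcop
  obtain ⟨p, hp, hpd, hpm⟩ := hcop
  have hdk : d ∣ k := hgcd ▸ Nat.gcd_dvd_left k n
  obtain ⟨j, hj⟩ := hdk
  have h1 : d * p ∣ k ^ 2 := by
    obtain ⟨q, hq⟩ := hpd
    exact ⟨q * j ^ 2, by rw [hj, hq]; ring⟩
  have h2 : d * p ∣ n := by
    rw [← hdm]; exact Nat.mul_dvd_mul_left d hpm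
  have h3 : d * p ∣ k := dvd_trans (Nat.dvd_gcd h1 h2) hreg
  have h4 : d * p ∣ d := by
    have h4' : d * p ∣ Nat.gcd k n := Nat.dvd_gcd h3 h2
    rwa [hgcd] at h4'
  have : p ∣ 1 := by
    rcases h4 with ⟨c, hc⟩
    have : d * 1 = d * (p * c) := by rw [mul_one, ← mul_assoc]; exact hc
    exact ⟨c, (Nat.eq_of_mul_eq_mul_left hd0 this)⟩
  exact hp.ne_one (Nat.dvd_one.mp this)


private lemma sum_reg (n r : ℕ) (hn : 0 < n) :
    ∑ k ∈ Reg n, (k : ℝ) ^ r =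
      ∑ d ∈ n.divisors.filter fun d => Nat.Coprime d (n / d),
        ∑ j ∈ (Icc 1 (n / d)).filter fun j => Nat.Coprime j (n / d), ((d * j : ℕ) : ℝ) ^ r := by
  have hmaps : ∀ k ∈ Reg n, Nat.gcd k n ∈ n.divisors := by
    intro k hk
    simp only [Reg, mem_filter, mem_Icc] at hk
    exact Nat.mem_divisors.mpr ⟨Nat.gcd_dvd_right k n, hn.ne'⟩
  rw [← Finset.sum_fiberwise_of_maps_to hmaps (fun k => (k : ℝ) ^ r)]
  rw [← Finset.sum_filter_of_ne (p := fun d => Nat.Coprime d (n / d))]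
  · apply Finset.sum_congr rfl
    intro d hd
    simp only [mem_filter, Nat.mem_divisors] at hd
    rw [fiber_eq n d hn hd.1.1 hd.2, Finset.sum_image]
    intro a _ b _ hab
    have hd0 : 0 < d := Nat.pos_of_dvd_of_pos hd.1.1 hn
    exact Nat.eq_of_mul_eq_mul_left hd0 hab
  · intro d hd hne
    by_contra hcop
    rw [fiber_empty n d hn (Nat.mem_divisors.mp hd).1 hcop] at hne
    simp at hne

private lemma divisors_filter_dvd (m j : ℕ) (hm : m ≠ 0) :
    m.divisors.filter (fun e => e ∣ j) = (Nat.gcd m j).divisors := by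
  ext e
  simp only [mem_filter, Nat.mem_divisors]
  constructor
  · rintro ⟨⟨h1, _⟩, h2⟩
    exact ⟨Nat.dvd_gcd h1 h2, Nat.gcd_ne_zero_left hm⟩
  · rintro ⟨h1, _⟩
    exact ⟨⟨h1.trans (Nat.gcd_dvd_left m j), hm⟩, h1.trans (Nat.gcd_dvd_right m j)⟩

private lemma coprime_sum (m r : ℕ) (hm : m ≠ 0) :
    ∑ j ∈ (Icc 1 m).filter (fun j => Nat.Coprime j m), (j : ℝ) ^ r =
      ∑ e ∈ m.divisors, ((μ e : ℤ) : ℝ) * ((e : ℝ) ^ r * ∑ i ∈ Icc 1 (m / e), (i : ℝ) ^ r) := by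
  rw [Finset.sum_filter]
  have key : ∀ j ∈ Icc 1 m,
      (if Nat.Coprime j m then (j : ℝ) ^ r else 0) =
        ∑ e ∈ m.divisors, (if e ∣ j then ((μ e : ℤ) : ℝ) else 0) * (j : ℝ) ^ r := by
    intro j hj
    rw [← Finset.sum_mul, ← Finset.sum_filter, divisors_filter_dvd m j hm, moebius_sum_divisors]
    have : Nat.Coprime j m ↔ Nat.gcd m j = 1 := by rw [Nat.Coprime, Nat.gcd_comm]
    by_cases h : Nat.Coprime j m
    · rw [if_pos h, if_pos (this.mp h), one_mul]
    · rw [if_neg h, if_neg (fun hh => h (this.mpr hh)), zero_mul]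
  rw [Finset.sum_congr rfl key, Finset.sum_comm]
  apply Finset.sum_congr rfl
  intro e he
  obtain ⟨hedvd, -⟩ := Nat.mem_divisors.mp he
  have he0 : e ≠ 0 := by rintro rfl; exact hm (Nat.eq_zero_of_zero_dvd hedvd)
  have himg : (Icc 1 m).filter (fun j => e ∣ j) = (Icc 1 (m / e)).image (fun i => e * i) := by
    ext j
    simp only [mem_filter, mem_image, mem_Icc]
    constructor
    · rintro ⟨⟨h1, h2⟩, i, rfl⟩
      refine ⟨i, ⟨?_, ?_⟩, rfl⟩
      · rcases Nat.eq_zero_or_pos i with rfl | h; · omega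
        · exact h
      · exact Nat.le_div_iff_mul_le (Nat.pos_of_ne_zero he0) |>.mpr (by rwa [mul_comm])
    · rintro ⟨i, ⟨h1, h2⟩, rfl⟩
      refine ⟨⟨?_, ?_⟩, ⟨i, rfl⟩⟩
      · have : 0 < e * i := Nat.mul_pos (Nat.pos_of_ne_zero he0) h1
        omega
      · calc e * i ≤ e * (m / e) := Nat.mul_le_mul_left e h2
          _ = m := Nat.mul_div_cancel' hedvd
  calc ∑ j ∈ Icc 1 m, (if e ∣ j then ((μ e : ℤ) : ℝ) else 0) * (j : ℝ) ^ r
      = ∑ j ∈ (Icc 1 m).filter (fun j => e ∣ j), ((μ e : ℤ) : ℝ) * (j : ℝ) ^ r := by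
        rw [Finset.sum_filter]
        exact Finset.sum_congr rfl fun j _ => by rw [ite_mul, zero_mul]
    _ = ∑ i ∈ Icc 1 (m / e), ((μ e : ℤ) : ℝ) * ((e * i : ℕ) : ℝ) ^ r := by
        rw [himg, Finset.sum_image
          (fun a _ b _ h => Nat.eq_of_mul_eq_mul_left (Nat.pos_of_ne_zero he0) h)]
    _ = ((μ e : ℤ) : ℝ) * ((e : ℝ) ^ r * ∑ i ∈ Icc 1 (m / e), (i : ℝ) ^ r) := by
        rw [Finset.mul_sum, Finset.mul_sum]
        apply Finset.sum_congr rfl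
        intro i _
        push_cast
        ring


private lemma zpow_prod (s : ℤ) (t : Finset ℕ) (f : ℕ → ℕ) :
    ((∏ p ∈ t, f p : ℕ) : ℝ) ^ s = ∏ p ∈ t, ((f p : ℕ) : ℝ) ^ s := by
  rw [Nat.cast_prod]
  exact (Finset.prod_zpow (fun p => ((f p : ℕ) : ℝ)) t s).symm

private lemma moebius_sum_eq_prod (s : ℤ) (m : ℕ) (hm : m ≠ 0) :
    ∑ e ∈ m.divisors, ((μ e : ℤ) : ℝ) * (e : ℝ) ^ s =
      ∏ p ∈ m.primeFactors, (1 - (p : ℝ) ^ s) := by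
  have h1 : ∑ e ∈ m.divisors, ((μ e : ℤ) : ℝ) * (e : ℝ) ^ s =
      ∑ e ∈ m.divisors.filter Squarefree, ((μ e : ℤ) : ℝ) * (e : ℝ) ^ s := by
    symm
    apply Finset.sum_filter_of_ne
    intro e _ hne
    by_contra hs
    rw [moebius_eq_zero_of_not_squarefree hs] at hne
    simp at hne
  rw [h1, Nat.sum_divisors_filter_squarefree hm]
  have hfac : (UniqueFactorizationMonoid.normalizedFactors m).toFinset = m.primeFactors := by
    rw [Nat.factors_eq]
    exact Nat.toFinset_factors m
  rw [hfac]
  have h2 : ∀ p ∈ m.primeFactors, (1 : ℝ) - (p : ℝ) ^ s = (-(p : ℝ) ^ s) + 1 := by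
    intro p _; ring
  rw [Finset.prod_congr rfl h2, Finset.prod_add]
  apply Finset.sum_congr rfl
  intro t ht
  rw [Finset.mem_powerset] at ht
  have hprimes : ∀ p ∈ t, Nat.Prime p := fun p hp => Nat.prime_of_mem_primeFactors (ht hp)
  have hval : t.val.prod = ∏ p ∈ t, p := by
    rw [Finset.prod_eq_multiset_prod]
    simp
  rw [hval]
  have hmu2 : (μ (∏ p ∈ t, p) : ℤ) = (-1) ^ t.card := by
    rw [isMultiplicative_moebius.map_prod_of_prime t hprimes,
      Finset.prod_congr rfl fun p hp => moebius_apply_prime (hprimes p hp),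
      Finset.prod_const]
  rw [hmu2, zpow_prod s t (fun p => p), Finset.prod_const_one, mul_one]
  have h3 : ∏ p ∈ t, (-(p : ℝ) ^ s) = ((-1 : ℝ)) ^ t.card * ∏ p ∈ t, (p : ℝ) ^ s := by
    rw [← Finset.prod_const (-1 : ℝ), ← Finset.prod_mul_distrib]
    exact Finset.prod_congr rfl fun p _ => (neg_one_mul _).symm
  rw [h3]
  push_cast
  ring


private lemma prod_pow_factorization_eq_self {n : ℕ} (hn : n ≠ 0) :
    ∏ p ∈ n.primeFactors, p ^ n.factorization p = n := by
  have h := Nat.factorization_prod_pow_eq_self hn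
  rw [Finsupp.prod] at h
  rwa [Nat.support_factorization] at h

private lemma primeFactors_prod_pow {n : ℕ} (hn : n ≠ 0) {S : Finset ℕ}
    (hS : S ⊆ n.primeFactors) :
    (∏ p ∈ S, p ^ n.factorization p).primeFactors = S := by
  ext q
  have hnz : ∏ p ∈ S, p ^ n.factorization p ≠ 0 := by
    apply Finset.prod_ne_zero_iff.mpr
    intro p hp
    exact pow_ne_zero _ (Nat.prime_of_mem_primeFactors (hS hp)).ne_zero
  rw [Nat.mem_primeFactors]
  constructor
  · rintro ⟨hq, hdvd, -⟩
    obtain ⟨p, hp, hqp⟩ := (Nat.Prime.prime hq).exists_mem_finset_dvd hdvd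
    have hpprime := Nat.prime_of_mem_primeFactors (hS hp)
    have heq : q = p := (Nat.prime_dvd_prime_iff_eq hq hpprime).mp (hq.dvd_of_dvd_pow hqp)
    rwa [heq]
  · intro hq
    have hqprime := Nat.prime_of_mem_primeFactors (hS hq)
    refine ⟨hqprime, ?_, hnz⟩
    have h1 : n.factorization q ≠ 0 := by
      have hmem : q ∈ n.factorization.support := by
        rw [Nat.support_factorization]; exact hS hq
      exact Finsupp.mem_support_iff.mp hmem
    calc q = q ^ 1 := (pow_one q).symm
      _ ∣ q ^ n.factorization q := pow_dvd_pow q (Nat.one_le_iff_ne_zero.mpr h1)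
      _ ∣ _ := Finset.dvd_prod_of_mem (fun p => p ^ n.factorization p) hq

private lemma unitary_eq_prod {n d : ℕ} (hn : n ≠ 0) (hd : d ∣ n)
    (hcop : Nat.Coprime d (n / d)) :
    ∏ p ∈ d.primeFactors, p ^ n.factorization p = d := by
  have hd0 : d ≠ 0 := by rintro rfl; exact hn (Nat.eq_zero_of_zero_dvd hd)
  have hc0 : n / d ≠ 0 := by
    have := Nat.div_pos (Nat.le_of_dvd (Nat.pos_of_ne_zero hn) hd) (Nat.pos_of_ne_zero hd0)
    omega
  have hkey : ∀ p ∈ d.primeFactors, p ^ n.factorization p = p ^ d.factorization p := by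
    intro p hp
    have hpd := Nat.prime_of_mem_primeFactors hp
    have hpdvd : p ∣ d := Nat.dvd_of_mem_primeFactors hp
    have hpc : ¬ p ∣ (n / d) := by
      intro hpc
      have hg : p ∣ Nat.gcd d (n / d) := Nat.dvd_gcd hpdvd hpc
      rw [Nat.Coprime.gcd_eq_one hcop] at hg
      exact hpd.ne_one (Nat.dvd_one.mp hg)
    have hmul : d * (n / d) = n := Nat.mul_div_cancel' hd
    rw [← hmul, Nat.factorization_mul hd0 hc0, Finsupp.add_apply,
      Nat.factorization_eq_zero_of_not_dvd hpc, add_zero]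
  rw [Finset.prod_congr rfl hkey, prod_pow_factorization_eq_self hd0]

private lemma sum_unitary {n : ℕ} (hn : n ≠ 0) (F : ℕ → ℕ → ℝ) :
    ∑ d ∈ n.divisors.filter (fun d => Nat.Coprime d (n / d)), F d (n / d) =
      ∑ S ∈ n.primeFactors.powerset,
        F (∏ p ∈ S, p ^ n.factorization p) (∏ p ∈ n.primeFactors \ S, p ^ n.factorization p) := by
  have hprodS : ∀ S ⊆ n.primeFactors,
      (∏ p ∈ S, p ^ n.factorization p) * (∏ p ∈ n.primeFactors \ S, p ^ n.factorization p) = n := by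
    intro S hS
    rw [mul_comm, Finset.prod_sdiff hS]
    exact prod_pow_factorization_eq_self hn
  have hcopS : ∀ S ⊆ n.primeFactors,
      Nat.Coprime (∏ p ∈ S, p ^ n.factorization p)
        (∏ p ∈ n.primeFactors \ S, p ^ n.factorization p) := by
    intro S hS
    rw [Nat.coprime_prod_left_iff]
    intro p hp
    rw [Nat.coprime_prod_right_iff]
    intro q hq
    have hpq : p ≠ q := by
      rintro rfl
      exact (Finset.mem_sdiff.mp hq).2 hp
    exact Nat.Coprime.pow _ _ ((Nat.coprime_primes
      (Nat.prime_of_mem_primeFactors (hS hp))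
      (Nat.prime_of_mem_primeFactors (Finset.mem_sdiff.mp hq).1)).mpr hpq)
  apply Finset.sum_nbij' (i := fun d => d.primeFactors)
    (j := fun S => ∏ p ∈ S, p ^ n.factorization p)
  · intro d hd
    simp only [mem_filter, Nat.mem_divisors] at hd
    exact Finset.mem_powerset.mpr (Nat.primeFactors_mono hd.1.1 hn)
  · intro S hS
    rw [Finset.mem_powerset] at hS
    have hdvd : (∏ p ∈ S, p ^ n.factorization p) ∣ n := ⟨_, (hprodS S hS).symm⟩
    refine Finset.mem_filter.mpr ⟨Nat.mem_divisors.mpr ⟨hdvd, hn⟩, ?_⟩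
    have hq : n / (∏ p ∈ S, p ^ n.factorization p) = ∏ p ∈ n.primeFactors \ S, p ^ n.factorization p := by
      have hpos : 0 < ∏ p ∈ S, p ^ n.factorization p := by
        apply Nat.pos_of_ne_zero
        apply Finset.prod_ne_zero_iff.mpr
        intro p hp
        exact pow_ne_zero _ (Nat.prime_of_mem_primeFactors (hS hp)).ne_zero
      exact Nat.div_eq_of_eq_mul_left hpos ((hprodS S hS).symm.trans (mul_comm _ _))
    rw [hq]
    exact hcopS S hS
  · intro d hd
    simp only [mem_filter, Nat.mem_divisors] at hd
    exact unitary_eq_prod hn hd.1.1 hd.2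
  · intro S hS
    rw [Finset.mem_powerset] at hS
    exact primeFactors_prod_pow hn hS
  · intro d hd
    simp only [mem_filter, Nat.mem_divisors] at hd
    have h1 : ∏ p ∈ d.primeFactors, p ^ n.factorization p = d := unitary_eq_prod hn hd.1.1 hd.2
    have hS : d.primeFactors ⊆ n.primeFactors := Nat.primeFactors_mono hd.1.1 hn
    have h2 : n / d = ∏ p ∈ n.primeFactors \ d.primeFactors, p ^ n.factorization p := by
      have hdX := hprodS d.primeFactors hS
      rw [h1] at hdX
      exact Nat.div_eq_of_eq_mul_left (Nat.pos_of_dvd_of_pos hd.1.1 (Nat.pos_of_ne_zero hn))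
        (((mul_comm _ _).trans hdX).symm)
    rw [h1, ← h2]


private lemma V_eq (n : ℕ) (hn : n ≠ 0) (s : ℤ) :
    ∑ d ∈ n.divisors.filter (fun d => Nat.Coprime d (n / d)),
        ∑ e ∈ (n / d).divisors, ((μ e : ℤ) : ℝ) * ((d * e : ℕ) : ℝ) ^ s =
      ∏ p ∈ n.primeFactors, ((p : ℝ) ^ (s * (n.factorization p : ℤ)) - (p : ℝ) ^ s + 1) := by
  have hG : ∃ G : ℕ → ℕ → ℝ, G = fun (a b : ℕ) => (a : ℝ) ^ s * ∏ p ∈ b.primeFactors, (1 - (p : ℝ) ^ s) :=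
    ⟨_, rfl⟩
  obtain ⟨G, hGdef⟩ := hG
  have step1 : ∀ d ∈ n.divisors.filter (fun d => Nat.Coprime d (n / d)),
      ∑ e ∈ (n / d).divisors, ((μ e : ℤ) : ℝ) * ((d * e : ℕ) : ℝ) ^ s =
        G d (n / d) := by
    intro d hd
    simp only [mem_filter, Nat.mem_divisors] at hd
    have hm0 : n / d ≠ 0 := by
      have h1 : 0 < d := Nat.pos_of_dvd_of_pos hd.1.1 (Nat.pos_of_ne_zero hn)
      have := Nat.div_pos (Nat.le_of_dvd (Nat.pos_of_ne_zero hn) hd.1.1) h1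
      omega
    rw [hGdef]
    simp only
    rw [← moebius_sum_eq_prod s (n / d) hm0, Finset.mul_sum]
    apply Finset.sum_congr rfl
    intro e he
    push_cast
    rw [mul_zpow]
    ring
  rw [Finset.sum_congr rfl step1, sum_unitary hn G]
  have hprodadd := Finset.prod_add (fun (p : ℕ) => (p : ℝ) ^ (s * (n.factorization p : ℤ)))
    (fun (p : ℕ) => 1 - (p : ℝ) ^ s) n.primeFactors
  have hterm : ∀ S ∈ n.primeFactors.powerset,
      G (∏ p ∈ S, p ^ n.factorization p) (∏ p ∈ n.primeFactors \ S, p ^ n.factorization p) =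
        (∏ p ∈ S, (p : ℝ) ^ (s * (n.factorization p : ℤ))) *
          ∏ p ∈ n.primeFactors \ S, (1 - (p : ℝ) ^ s) := by
    intro S hS
    rw [Finset.mem_powerset] at hS
    rw [hGdef]
    simp only
    rw [primeFactors_prod_pow hn (Finset.sdiff_subset.trans (le_refl _)), zpow_prod]
    refine congrArg₂ (· * ·) ?_ rfl
    apply Finset.prod_congr rfl
    intro p hp
    have hcast : ((p ^ n.factorization p : ℕ) : ℝ) = ((p : ℝ)) ^ (n.factorization p) := by
      push_cast; rfl
    rw [hcast, ← zpow_natCast ((p : ℝ)) (n.factorization p), ← zpow_mul,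
      mul_comm (n.factorization p : ℤ) s]
  rw [Finset.sum_congr rfl hterm, ← hprodadd]
  apply Finset.prod_congr rfl
  intro p hp
  ring


theorem sum_pow_reg (n r : ℕ) (hn : 1 ≤ n) (hr : 1 ≤ r) :
    ∑ k ∈ Reg n, (k : ℝ) ^ r =
      (n : ℝ) ^ r / 2 + (n : ℝ) ^ r / (r + 1) *
        ∑ m ∈ Finset.range (r / 2 + 1),
          ((r + 1).choose (2 * m) : ℝ) * (bernoulli (2 * m) : ℝ) * rhoOneSubTwoM m n := by
  have hn0 : 0 < n := hn
  have hnne : n ≠ 0 := hn0.ne'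
  have hNne : (n : ℝ) ≠ 0 := by positivity
  have hr1 : ((r : ℝ) + 1) ≠ 0 := by positivity
  set D := n.divisors.filter (fun d => Nat.Coprime d (n / d)) with hD
  set c : ℕ → ℝ := fun i => ((bernoulli' i : ℚ) : ℝ) * ((r + 1).choose i : ℝ) *
    (n : ℝ) ^ (r + 1 - i) / ((r : ℝ) + 1) with hc
  set P : ℕ → ℝ := fun i => ∏ p ∈ n.primeFactors,
    ((p : ℝ) ^ (((i : ℤ) - 1) * (n.factorization p : ℤ)) - (p : ℝ) ^ ((i : ℤ) - 1) + 1) with hP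
  have step : ∑ k ∈ Reg n, (k : ℝ) ^ r = ∑ i ∈ range (r + 1), c i * P i := by
    rw [sum_reg n r hn0]
    calc ∑ d ∈ D, ∑ j ∈ (Icc 1 (n / d)).filter fun j => Nat.Coprime j (n / d),
          ((d * j : ℕ) : ℝ) ^ r
        = ∑ d ∈ D, ∑ e ∈ (n / d).divisors, ∑ i ∈ range (r + 1),
            c i * (((μ e : ℤ) : ℝ) * ((d * e : ℕ) : ℝ) ^ ((i : ℤ) - 1)) := by
          apply Finset.sum_congr rfl
          intro d hd
          rw [hD, mem_filter, Nat.mem_divisors] at hd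
          have hd0 : d ≠ 0 := by rintro rfl; exact hnne (Nat.eq_zero_of_zero_dvd hd.1.1)
          have hm0 : n / d ≠ 0 := by
            have := Nat.div_pos (Nat.le_of_dvd hn0 hd.1.1) (Nat.pos_of_ne_zero hd0)
            omega
          have h1 : ∑ j ∈ (Icc 1 (n / d)).filter (fun j => Nat.Coprime j (n / d)),
              ((d * j : ℕ) : ℝ) ^ r =
              (d : ℝ) ^ r * ∑ j ∈ (Icc 1 (n / d)).filter (fun j => Nat.Coprime j (n / d)),
                (j : ℝ) ^ r := by
            rw [Finset.mul_sum]
            apply Finset.sum_congr rfl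
            intro j _
            push_cast
            ring
          rw [h1, coprime_sum (n / d) r hm0, Finset.mul_sum]
          apply Finset.sum_congr rfl
          intro e he
          obtain ⟨hedvd, -⟩ := Nat.mem_divisors.mp he
          have he0 : e ≠ 0 := by rintro rfl; exact hm0 (Nat.eq_zero_of_zero_dvd hedvd)
          rw [faulhaber_real (n / d / e) r, Finset.mul_sum, Finset.mul_sum, Finset.mul_sum]
          apply Finset.sum_congr rfl
          intro i hi
          have hir : i ≤ r := Nat.lt_succ_iff.mp (mem_range.mp hi)
          have hde : d * e ∣ n := (Nat.dvd_div_iff_mul_dvd hd.1.1).mp hedvd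
          have hdeR : ((d : ℝ) * (e : ℝ)) ≠ 0 := by
            have : (d : ℝ) ≠ 0 := Nat.cast_ne_zero.mpr hd0
            have : (e : ℝ) ≠ 0 := Nat.cast_ne_zero.mpr he0
            positivity
          have hndde : ((n / d / e : ℕ) : ℝ) = (n : ℝ) / ((d : ℝ) * (e : ℝ)) := by
            rw [Nat.div_div_eq_div_mul,
              Nat.cast_div hde (Nat.cast_ne_zero.mpr (Nat.mul_ne_zero hd0 he0))]
            push_cast
            ring
          have h5 : ((d : ℝ) * (e : ℝ)) ^ r / ((d : ℝ) * (e : ℝ)) ^ (r + 1 - i) =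
              ((d : ℝ) * (e : ℝ)) ^ ((i : ℤ) - 1) := by
            rw [← zpow_natCast ((d : ℝ) * (e : ℝ)) r,
              ← zpow_natCast ((d : ℝ) * (e : ℝ)) (r + 1 - i), ← zpow_sub₀ hdeR]
            congr 1
            omega
          have hkey : (d : ℝ) ^ r * (e : ℝ) ^ r *
              ((n : ℝ) / ((d : ℝ) * (e : ℝ))) ^ (r + 1 - i) =
              (n : ℝ) ^ (r + 1 - i) * ((d : ℝ) * (e : ℝ)) ^ ((i : ℤ) - 1) := by
            rw [div_pow, ← h5]
            field_simp
            ring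
          rw [hndde, hc]
          push_cast
          linear_combination (((μ e : ℤ) : ℝ) * ((bernoulli' i : ℚ) : ℝ) *
            (((r + 1).choose i : ℕ) : ℝ) / ((r : ℝ) + 1)) * hkey
      _ = ∑ i ∈ range (r + 1), ∑ d ∈ D, ∑ e ∈ (n / d).divisors,
            c i * (((μ e : ℤ) : ℝ) * ((d * e : ℕ) : ℝ) ^ ((i : ℤ) - 1)) := by
          rw [Finset.sum_congr rfl (fun d _ => Finset.sum_comm), Finset.sum_comm]
      _ = ∑ i ∈ range (r + 1), c i * P i := by
          apply Finset.sum_congr rfl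
          intro i _
          rw [hP]
          simp only
          rw [← V_eq n hnne ((i : ℤ) - 1), Finset.mul_sum]
          apply Finset.sum_congr rfl
          intro d _
          rw [Finset.mul_sum]
  rw [step, ← Finset.sum_filter_add_sum_filter_not (range (r + 1)) (fun i => Even i)
    (fun i => c i * P i)]
  have hodd : ∑ i ∈ (range (r + 1)).filter (fun i => ¬ Even i), c i * P i = (n : ℝ) ^ r / 2 := by
    have h1mem : 1 ∈ (range (r + 1)).filter (fun i => ¬ Even i) := by
      rw [mem_filter, mem_range]
      refine ⟨by omega, by simp⟩
    rw [Finset.sum_eq_single_of_mem 1 h1mem ?_]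
    · have hP1 : P 1 = 1 := by
        rw [hP]
        simp only
        apply Finset.prod_eq_one
        intro p hp
        norm_num
      rw [hP1, hc]
      simp only [bernoulli'_one, Nat.choose_one_right]
      push_cast
      field_simp
    · intro b hb hb1
      rw [mem_filter, mem_range] at hb
      have hoddb : Odd b := Nat.not_even_iff_odd.mp hb.2
      have hb3 : 1 < b := by
        rcases hoddb with ⟨t, ht⟩
        omega
      have hz : bernoulli' b = 0 := bernoulli'_eq_zero_of_odd hoddb hb3
      rw [hc]
      simp [hz]
  have heven : ∑ i ∈ (range (r + 1)).filter (fun i => Even i), c i * P i =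
      (n : ℝ) ^ r / ((r : ℝ) + 1) * ∑ m ∈ range (r / 2 + 1),
        ((r + 1).choose (2 * m) : ℝ) * (bernoulli (2 * m) : ℝ) * rhoOneSubTwoM m n := by
    rw [Finset.mul_sum]
    symm
    apply Finset.sum_nbij' (i := fun m => 2 * m) (j := fun a => a / 2)
    · intro m hm
      rw [mem_range] at hm
      rw [mem_filter, mem_range]
      exact ⟨by omega, even_two_mul m⟩
    · intro a ha
      rw [mem_filter, mem_range] at ha
      rw [mem_range]
      omega
    · intro m _
      omega
    · intro a ha
      rw [mem_filter, mem_range] at ha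
      have := Nat.even_iff.mp ha.2
      omega
    · intro m hm
      rw [mem_range] at hm
      have h2m : 2 * m ≤ r := by omega
      have hPm : P (2 * m) = ∏ p ∈ n.primeFactors,
          ((p : ℝ) ^ ((2 * (m : ℤ) - 1) * (n.factorization p : ℤ)) -
            (p : ℝ) ^ (2 * (m : ℤ) - 1) + 1) := by
        rw [hP]
        simp only
        apply Finset.prod_congr rfl
        intro p _
        have hexp : ((2 * m : ℕ) : ℤ) - 1 = 2 * (m : ℤ) - 1 := by push_cast; ring
        rw [hexp]
      have hNsplit : (n : ℝ) ^ (r + 1 - 2 * m) =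
          (n : ℝ) ^ r * (n : ℝ) ^ ((1 : ℤ) - 2 * (m : ℤ)) := by
        rw [← zpow_natCast (n : ℝ) (r + 1 - 2 * m), ← zpow_natCast (n : ℝ) r,
          ← zpow_add₀ hNne]
        congr 1
        omega
      have hbern : (bernoulli (2 * m) : ℚ) = bernoulli' (2 * m) :=
        bernoulli_eq_bernoulli'_of_ne_one (by omega)
      rw [hc]
      simp only
      rw [rhoOneSubTwoM, hPm, hNsplit, hbern]
      push_cast
      ring
  rw [hodd, heven]
  ring
end

section
/- Let f : ℕ → ℂ be an arbitrary arithmetic function. For every n ∈ ℕ and t ∈ ℤ, Σ_{k ∈ Reg_n} f(gcd(k,n)) exp(2πikt/n) = Σ_{d || n} f(d) c_{n/d}(t), where the sum on the right runs over the unitary divisors d of n and c_m(t) is the Ramanujan sum. Moreover, if f is integer-valued and multiplicative, then for each fixed t the function n ↦ Σ_{k ∈ Reg_n} f(gcd(k,n)) exp(2πikt/n) is integer-valued and multiplicative. -/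
open Finset Real
open scoped Classical

/-- The Ramanujan sum `c_m(t) = Σ_{1 ≤ k ≤ m, gcd(k,m)=1} exp(2πikt/m)`. -/
noncomputable def ramanujanSum (m : ℕ) (t : ℤ) : ℂ :=
  ∑ k ∈ (Finset.Icc 1 m).filter fun k => Nat.Coprime k m,
    Complex.exp (2 * Real.pi * Complex.I * k * t / m)

/-- `P^reg_{f,t}(n) = Σ_{k ∈ Reg_n} f(gcd(k,n)) exp(2πikt/n)`. -/
noncomputable def PregSum (f : ℕ → ℂ) (t : ℤ) (n : ℕ) : ℂ :=
  ∑ k ∈ Reg n, f (Nat.gcd k n) * Complex.exp (2 * Real.pi * Complex.I * k * t / n)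

section Aux

open ArithmeticFunction

lemma aux_regular_iff_unitary {k n : ℕ} (hk : 0 < k) :
    IsRegularMod k n ↔ Nat.Coprime (Nat.gcd k n) (n / Nat.gcd k n) := by
  set d := Nat.gcd k n with hd
  set m := n / d with hm
  have hdpos : 0 < d := Nat.gcd_pos_of_pos_left _ hk
  have hdk : d ∣ k := Nat.gcd_dvd_left _ _
  have hdn : d ∣ n := Nat.gcd_dvd_right _ _
  have hdm : d * m = n := Nat.mul_div_cancel' hdn
  constructor
  · rintro ⟨x, hx⟩
    set g := Nat.gcd d m with hg
    have hgd : g ∣ d := Nat.gcd_dvd_left _ _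
    have hgm : g ∣ m := Nat.gcd_dvd_right _ _
    set k₁ := k / d with hk₁
    have hkd : d * k₁ = k := Nat.mul_div_cancel' hdk
    have hcop : Nat.Coprime k₁ m := Nat.coprime_div_gcd_div_gcd hdpos
    have hgk₁ : Nat.Coprime g k₁ := ((hcop.coprime_dvd_right hgm).symm)
    have h1 : ((d : ℤ) * g) ∣ (k : ℤ) * ((k : ℤ) * x - 1) := by
      have : ((d : ℤ) * g) ∣ (n : ℤ) := by
        obtain ⟨c, hc⟩ := hgm
        exact ⟨c, by push_cast [← hdm, hc]; ring⟩
      refine this.trans ?_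
      have : (k : ℤ) ^ 2 * x - k = k * (k * x - 1) := by ring
      rwa [this] at hx
    have h2 : (g : ℤ) ∣ (k₁ : ℤ) * ((k : ℤ) * x - 1) := by
      have hdne : (d : ℤ) ≠ 0 := by exact_mod_cast hdpos.ne'
      have : (d : ℤ) * g ∣ (d : ℤ) * ((k₁ : ℤ) * ((k : ℤ) * x - 1)) := by
        have : (k : ℤ) * ((k : ℤ) * x - 1) = (d : ℤ) * ((k₁ : ℤ) * ((k : ℤ) * x - 1)) := by
          rw [show (k : ℤ) = (d : ℤ) * k₁ by exact_mod_cast hkd.symm]; ring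
        rwa [this] at h1
      exact (mul_dvd_mul_iff_left hdne).mp this
    have h3 : (g : ℤ) ∣ ((k : ℤ) * x - 1) :=
      (Nat.isCoprime_iff_coprime.mpr hgk₁).dvd_of_dvd_mul_left h2
    have h4 : (g : ℤ) ∣ (k : ℤ) * x := Dvd.dvd.mul_right (by exact_mod_cast hgd.trans hdk) x
    have h5 : (g : ℤ) ∣ 1 := by
      have := dvd_sub h4 h3
      simpa using this
    have : g ∣ 1 := by exact_mod_cast h5
    exact Nat.dvd_one.mp this
  · intro h
    have hkm : Nat.Coprime k m := by
      have h1 : Nat.gcd k m ∣ d := Nat.dvd_gcd (Nat.gcd_dvd_left _ _)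
        ((Nat.gcd_dvd_right _ _).trans (hdm ▸ Dvd.intro_left d rfl))
      have h2 : Nat.gcd k m ∣ Nat.gcd d m := Nat.dvd_gcd h1 (Nat.gcd_dvd_right _ _)
      exact Nat.dvd_one.mp (h ▸ h2)
    obtain ⟨u, v, huv⟩ := hkm.isCoprime
    refine ⟨u, ?_⟩
    have hmdvd : (m : ℤ) ∣ (k : ℤ) * u - 1 := ⟨-v, by linear_combination huv⟩
    have hddvd : (d : ℤ) ∣ (k : ℤ) := by exact_mod_cast hdk
    have : ((d : ℤ) * m) ∣ (k : ℤ) * ((k : ℤ) * u - 1) := mul_dvd_mul hddvd hmdvd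
    have hn' : ((n : ℤ)) = (d : ℤ) * m := by exact_mod_cast hdm.symm
    rw [show (k : ℤ) ^ 2 * u - k = k * (k * u - 1) by ring, hn']
    exact this

lemma aux_sum_exp_eq (m : ℕ) (hm : 0 < m) (t : ℤ) :
    ∑ j ∈ Finset.Icc 1 m, Complex.exp (2 * Real.pi * Complex.I * j * t / m)
      = if (m : ℤ) ∣ t then (m : ℂ) else 0 := by
  have hm0 : (m : ℂ) ≠ 0 := Nat.cast_ne_zero.mpr hm.ne'
  set zz : ℂ := Complex.exp (2 * Real.pi * Complex.I * t / m) with hzz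
  have hterm : ∀ j : ℕ, Complex.exp (2 * Real.pi * Complex.I * j * t / m) = zz ^ j := by
    intro j
    rw [hzz, ← Complex.exp_nat_mul]
    congr 1
    ring
  rw [Finset.sum_congr rfl fun j _ => hterm j]
  by_cases hdvd : (m : ℤ) ∣ t
  · have hzz1 : zz = 1 := by
      obtain ⟨s, hs⟩ := hdvd
      rw [hzz, show 2 * (Real.pi : ℂ) * Complex.I * t / m = s * (2 * Real.pi * Complex.I) by
        field_simp [hs]; exact_mod_cast hs]
      exact Complex.exp_int_mul_two_pi_mul_I s
    rw [if_pos hdvd]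
    simp [hzz1]
  · have hzzne : zz ≠ 1 := by
      intro h
      rw [hzz, Complex.exp_eq_one_iff] at h
      obtain ⟨n, hn⟩ := h
      apply hdvd
      refine ⟨n, ?_⟩
      have h2 : (2 : ℂ) * Real.pi * Complex.I ≠ 0 := by
        simp [Real.pi_ne_zero, Complex.I_ne_zero]
      have : (t : ℂ) = m * n := by
        field_simp at hn
        have : (2 : ℂ) * Real.pi * Complex.I * t = 2 * Real.pi * Complex.I * (m * n) := by
          linear_combination (2 * (Real.pi : ℂ) * Complex.I) * hn
        exact mul_left_cancel₀ h2 this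
      exact_mod_cast this
    have hzzm : zz ^ m = 1 := by
      rw [hzz, ← Complex.exp_nat_mul,
        show (m : ℂ) * (2 * Real.pi * Complex.I * t / m) = t * (2 * Real.pi * Complex.I) by
          field_simp]
      exact Complex.exp_int_mul_two_pi_mul_I t
    have hs : ∑ j ∈ Finset.Icc 1 m, zz ^ j = zz * ∑ j ∈ Finset.range m, zz ^ j := by
      rw [show Finset.Icc 1 m = Finset.Ico 1 (m + 1) by rw [Finset.Ico_add_one_right_eq_Icc],
        Finset.sum_Ico_eq_sum_range]
      simp [pow_add, Finset.mul_sum]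
    rw [hs, geom_sum_eq hzzne, hzzm]
    simp [hdvd]

noncomputable def hFun (t : ℤ) : ArithmeticFunction ℤ :=
  ⟨fun n => if n ≠ 0 ∧ (n : ℤ) ∣ t then (n : ℤ) else 0, by simp⟩

noncomputable def cFun (t : ℤ) : ArithmeticFunction ℤ := hFun t * ArithmeticFunction.moebius

lemma hFun_apply (t : ℤ) (n : ℕ) :
    hFun t n = if n ≠ 0 ∧ (n : ℤ) ∣ t then (n : ℤ) else 0 := rfl

lemma hFun_mult (t : ℤ) : (hFun t).IsMultiplicative := by
  constructor
  · simp [hFun_apply]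
  · intro m n h
    rcases eq_or_ne m 0 with hm | hm
    · subst hm
      have : n = 1 := by simpa using h
      subst this; simp [hFun_apply]
    rcases eq_or_ne n 0 with hn | hn
    · subst hn
      have : m = 1 := by simpa using h
      subst this; simp [hFun_apply]
    have hmn : m * n ≠ 0 := mul_ne_zero hm hn
    have key : ((m : ℤ) * n ∣ t) ↔ ((m : ℤ) ∣ t ∧ (n : ℤ) ∣ t) :=
      ⟨fun hd => ⟨(dvd_mul_right _ _).trans hd, (dvd_mul_left _ _).trans hd⟩,
       fun hp => (h.isCoprime).mul_dvd hp.1 hp.2⟩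
    simp only [hFun_apply, hmn, hm, hn, ne_eq, not_false_eq_true, true_and, Nat.cast_mul, key]
    by_cases h1 : (m : ℤ) ∣ t <;> by_cases h2 : (n : ℤ) ∣ t <;> simp [h1, h2]

lemma cFun_mult (t : ℤ) : (cFun t).IsMultiplicative :=
  (hFun_mult t).mul isMultiplicative_moebius

lemma aux_sum_moebius_divisors (g : ℕ) :
    ∑ d ∈ g.divisors, (ArithmeticFunction.moebius d : ℤ) = if g = 1 then 1 else 0 := by
  have h := congrArg (fun f : ArithmeticFunction ℤ => f g) ArithmeticFunction.moebius_mul_coe_zeta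
  simp only [ArithmeticFunction.mul_apply, ArithmeticFunction.one_apply] at h
  rw [← h, ← Nat.sum_divisorsAntidiagonal (fun a _ => (ArithmeticFunction.moebius a : ℤ))]
  refine Finset.sum_congr rfl fun x hx => ?_
  have hx' := Nat.mem_divisorsAntidiagonal.mp hx
  have hb : x.2 ≠ 0 := by
    intro h0
    apply hx'.2
    rw [← hx'.1, h0, mul_zero]
  simp [ArithmeticFunction.natCoe_apply, ArithmeticFunction.zeta_apply, hb]

lemma aux_innerSum (m d : ℕ) (hm : 0 < m) (hd : d ∣ m) (hd0 : 0 < d) (t : ℤ) :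
    ∑ k ∈ (Finset.Icc 1 m).filter (fun k => d ∣ k),
        Complex.exp (2 * Real.pi * Complex.I * k * t / m)
      = ∑ j ∈ Finset.Icc 1 (m / d),
        Complex.exp (2 * Real.pi * Complex.I * j * t / ((m / d : ℕ) : ℂ)) := by
  refine Finset.sum_nbij' (fun k => k / d) (fun j => d * j) ?_ ?_ ?_ ?_ ?_
  · intro k hk
    simp only [Finset.mem_filter, Finset.mem_Icc] at hk ⊢
    obtain ⟨⟨hk1, hk2⟩, hdk⟩ := hk
    exact ⟨Nat.one_le_div_iff hd0 |>.mpr (Nat.le_of_dvd hk1 hdk), Nat.div_le_div_right hk2⟩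
  · intro j hj
    simp only [Finset.mem_Icc, Finset.mem_filter] at hj ⊢
    refine ⟨⟨?_, ?_⟩, Dvd.intro j rfl⟩
    · exact Nat.one_le_iff_ne_zero.mpr (mul_ne_zero hd0.ne' (Nat.one_le_iff_ne_zero.mp hj.1))
    · calc d * j ≤ d * (m / d) := Nat.mul_le_mul_left d hj.2
        _ = m := Nat.mul_div_cancel' hd
  · intro k hk
    simp only [Finset.mem_filter] at hk
    exact Nat.mul_div_cancel' hk.2
  · intro j _
    exact Nat.mul_div_cancel_left j hd0
  · intro k hk
    simp only [Finset.mem_filter, Finset.mem_Icc] at hk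
    congr 1
    have hdc : (d : ℂ) ≠ 0 := Nat.cast_ne_zero.mpr hd0.ne'
    have h1 : ((k / d : ℕ) : ℂ) * d = (k : ℂ) := by
      exact_mod_cast congrArg (Nat.cast : ℕ → ℂ) (Nat.div_mul_cancel hk.2)
    have h2 : ((m / d : ℕ) : ℂ) * d = (m : ℂ) := by
      exact_mod_cast congrArg (Nat.cast : ℕ → ℂ) (Nat.div_mul_cancel hd)
    rw [← h1, ← h2]
    have hmd : ((m / d : ℕ) : ℂ) ≠ 0 :=
      Nat.cast_ne_zero.mpr (Nat.div_ne_zero_iff.mpr ⟨hd0.ne', Nat.le_of_dvd hm hd⟩)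
    field_simp

open ArithmeticFunction in
lemma ramanujan_eq_cFun (m : ℕ) (hm : 0 < m) (t : ℤ) :
    ramanujanSum m t = ((cFun t m : ℤ) : ℂ) := by
  have hmne : m ≠ 0 := hm.ne'
  rw [ramanujanSum, Finset.sum_filter]
  have step2 : ∀ k ∈ Finset.Icc 1 m,
      (if Nat.Coprime k m then Complex.exp (2 * Real.pi * Complex.I * k * t / m) else 0)
        = ∑ d ∈ m.divisors, (if d ∣ k then ((moebius d : ℤ) : ℂ) else 0)
            * Complex.exp (2 * Real.pi * Complex.I * k * t / m) := by
    intro k hk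
    rw [← Finset.sum_mul, ← Finset.sum_filter]
    have hset : m.divisors.filter (fun d => d ∣ k) = (Nat.gcd k m).divisors := by
      ext d
      have hg : Nat.gcd k m ≠ 0 := fun h => hmne (Nat.gcd_eq_zero_iff.mp h).2
      simp only [Finset.mem_filter, Nat.mem_divisors, Nat.dvd_gcd_iff, hmne, hg]
      tauto
    rw [hset]
    have hsum : ∑ d ∈ (Nat.gcd k m).divisors, ((moebius d : ℤ) : ℂ)
        = if Nat.gcd k m = 1 then 1 else 0 := by
      have h0 := aux_sum_moebius_divisors (Nat.gcd k m)
      have h1 := congrArg (fun z : ℤ => (z : ℂ)) h0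
      push_cast at h1
      rw [h1]
    rw [hsum]
    by_cases h : Nat.gcd k m = 1 <;> simp [Nat.Coprime, h]
  rw [Finset.sum_congr rfl step2, Finset.sum_comm]
  have step3 : ∀ d ∈ m.divisors,
      (∑ k ∈ Finset.Icc 1 m, (if d ∣ k then ((moebius d : ℤ) : ℂ) else 0)
          * Complex.exp (2 * Real.pi * Complex.I * k * t / m))
        = ((moebius d : ℤ) : ℂ) * ((hFun t (m / d) : ℤ) : ℂ) := by
    intro d hd
    obtain ⟨hdm, -⟩ := Nat.mem_divisors.mp hd
    have hd0 : 0 < d := Nat.pos_of_mem_divisors hd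
    have hmd0 : 0 < m / d := Nat.div_pos (Nat.le_of_dvd hm hdm) hd0
    have : ∀ k ∈ Finset.Icc 1 m, (if d ∣ k then ((moebius d : ℤ) : ℂ) else 0)
          * Complex.exp (2 * Real.pi * Complex.I * k * t / m)
        = if d ∣ k then ((moebius d : ℤ) : ℂ)
            * Complex.exp (2 * Real.pi * Complex.I * k * t / m) else 0 := by
      intro k _; split <;> simp
    rw [Finset.sum_congr rfl this, ← Finset.sum_filter]
    rw [← Finset.mul_sum, aux_innerSum m d hm hdm hd0 t, aux_sum_exp_eq (m / d) hmd0 t]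
    congr 1
    rw [hFun_apply]
    simp only [hmd0.ne', ne_eq, not_false_eq_true, true_and]
    split <;> norm_cast
  rw [Finset.sum_congr rfl step3]
  have final : (cFun t m : ℤ) = ∑ d ∈ m.divisors, (moebius d : ℤ) * (hFun t (m / d) : ℤ) := by
    have : cFun t = moebius * hFun t := mul_comm _ _
    rw [this, ArithmeticFunction.mul_apply,
      Nat.sum_divisorsAntidiagonal (fun a b => (moebius a : ℤ) * (hFun t b : ℤ))]
  rw [final]
  push_cast
  rfl

lemma mem_unitaryDivisors_iff {n d : ℕ} :
    d ∈ unitaryDivisors n ↔ d ∣ n ∧ Nat.Coprime d (n / d) ∧ n ≠ 0 := by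
  simp only [unitaryDivisors, Finset.mem_filter, Nat.mem_divisors]
  tauto

lemma PregSum_eq (f : ℕ → ℂ) (n : ℕ) (hn : 0 < n) (t : ℤ) :
    PregSum f t n = ∑ d ∈ unitaryDivisors n, f d * ramanujanSum (n / d) t := by
  have hnne : n ≠ 0 := hn.ne'
  have hrhs : ∑ d ∈ unitaryDivisors n, f d * ramanujanSum (n / d) t
      = ∑ x ∈ (unitaryDivisors n).sigma
          (fun d => (Finset.Icc 1 (n / d)).filter fun j => Nat.Coprime j (n / d)),
          f x.1 * Complex.exp (2 * Real.pi * Complex.I * x.2 * t / ((n / x.1 : ℕ) : ℂ)) := by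
    rw [Finset.sum_sigma]
    exact Finset.sum_congr rfl fun d _ => by rw [ramanujanSum, Finset.mul_sum]
  rw [hrhs, PregSum]
  refine Finset.sum_nbij' (fun k => ⟨Nat.gcd k n, k / Nat.gcd k n⟩)
    (fun x => x.1 * x.2) ?_ ?_ ?_ ?_ ?_
  · intro k hk
    simp only [Reg, Finset.mem_filter, Finset.mem_Icc] at hk
    obtain ⟨⟨hk1, hk2⟩, hreg⟩ := hk
    have hgpos : 0 < Nat.gcd k n := Nat.gcd_pos_of_pos_left _ hk1
    simp only [Finset.mem_sigma, Finset.mem_filter, Finset.mem_Icc]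
    refine ⟨mem_unitaryDivisors_iff.mpr ⟨Nat.gcd_dvd_right _ _,
      (aux_regular_iff_unitary hk1).mp hreg, hnne⟩, ⟨?_, Nat.div_le_div_right hk2⟩,
      Nat.coprime_div_gcd_div_gcd hgpos⟩
    exact (Nat.one_le_div_iff hgpos).mpr (Nat.le_of_dvd hk1 (Nat.gcd_dvd_left _ _))
  · intro x hx
    simp only [Finset.mem_sigma, Finset.mem_filter, Finset.mem_Icc] at hx
    obtain ⟨hx1, ⟨hj1, hj2⟩, hjcop⟩ := hx
    obtain ⟨hdvd, hcop, -⟩ := mem_unitaryDivisors_iff.mp hx1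
    have hd0 : 0 < x.1 := Nat.pos_of_dvd_of_pos hdvd hn
    have hk1 : 0 < x.1 * x.2 := Nat.mul_pos hd0 (lt_of_lt_of_le one_pos hj1)
    have hkn : x.1 * x.2 ≤ n := by
      calc x.1 * x.2 ≤ x.1 * (n / x.1) := Nat.mul_le_mul_left _ hj2
        _ = n := Nat.mul_div_cancel' hdvd
    have hgcd : Nat.gcd (x.1 * x.2) n = x.1 := by
      conv_lhs => rw [← Nat.mul_div_cancel' hdvd]
      rw [Nat.gcd_mul_left, Nat.Coprime.gcd_eq_one hjcop, mul_one]
    simp only [Reg, Finset.mem_filter, Finset.mem_Icc]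
    refine ⟨⟨hk1, hkn⟩, ?_⟩
    rw [aux_regular_iff_unitary hk1, hgcd]
    exact hcop
  · intro k hk
    simp only [Reg, Finset.mem_filter, Finset.mem_Icc] at hk
    exact Nat.mul_div_cancel' (Nat.gcd_dvd_left _ _)
  · intro x hx
    simp only [Finset.mem_sigma, Finset.mem_filter, Finset.mem_Icc] at hx
    obtain ⟨hx1, ⟨hj1, hj2⟩, hjcop⟩ := hx
    obtain ⟨hdvd, hcop, -⟩ := mem_unitaryDivisors_iff.mp hx1
    have hd0 : 0 < x.1 := Nat.pos_of_dvd_of_pos hdvd hn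
    have hgcd : Nat.gcd (x.1 * x.2) n = x.1 := by
      conv_lhs => rw [← Nat.mul_div_cancel' hdvd]
      rw [Nat.gcd_mul_left, Nat.Coprime.gcd_eq_one hjcop, mul_one]
    have hdiv : x.1 * x.2 / x.1 = x.2 := Nat.mul_div_cancel_left _ hd0
    show (⟨Nat.gcd (x.1 * x.2) n, x.1 * x.2 / Nat.gcd (x.1 * x.2) n⟩ : (_ : ℕ) × ℕ) = x
    rw [hgcd, hdiv]
  · intro k hk
    simp only [Reg, Finset.mem_filter, Finset.mem_Icc] at hk
    obtain ⟨⟨hk1, hk2⟩, -⟩ := hk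
    have hgpos : 0 < Nat.gcd k n := Nat.gcd_pos_of_pos_left _ hk1
    have hgdvd : Nat.gcd k n ∣ n := Nat.gcd_dvd_right _ _
    congr 1
    have hgC : ((Nat.gcd k n : ℕ) : ℂ) ≠ 0 := Nat.cast_ne_zero.mpr hgpos.ne'
    have h1 : ((k / Nat.gcd k n : ℕ) : ℂ) * (Nat.gcd k n) = (k : ℂ) := by
      exact_mod_cast congrArg (Nat.cast : ℕ → ℂ) (Nat.div_mul_cancel (Nat.gcd_dvd_left k n))
    have h2 : ((n / Nat.gcd k n : ℕ) : ℂ) * (Nat.gcd k n) = (n : ℂ) := by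
      exact_mod_cast congrArg (Nat.cast : ℕ → ℂ) (Nat.div_mul_cancel hgdvd)
    have hmd : ((n / Nat.gcd k n : ℕ) : ℂ) ≠ 0 :=
      Nat.cast_ne_zero.mpr (Nat.div_ne_zero_iff.mpr ⟨hgpos.ne', Nat.le_of_dvd hn hgdvd⟩)
    rw [← h1, ← h2]
    field_simp

lemma ramanujanSum_one (t : ℤ) : ramanujanSum 1 t = 1 := by
  rw [ramanujan_eq_cFun 1 one_pos t, (cFun_mult t).map_one]
  norm_num

lemma ramanujanSum_mul {m₁ m₂ : ℕ} (h1 : 0 < m₁) (h2 : 0 < m₂) (hco : Nat.Coprime m₁ m₂)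
    (t : ℤ) : ramanujanSum (m₁ * m₂) t = ramanujanSum m₁ t * ramanujanSum m₂ t := by
  rw [ramanujan_eq_cFun _ (Nat.mul_pos h1 h2) t, ramanujan_eq_cFun _ h1 t,
    ramanujan_eq_cFun _ h2 t, (cFun_mult t).map_mul_of_coprime hco]
  push_cast
  ring

lemma unitary_prod_sum {a b : ℕ} (ha : a ≠ 0) (hb : b ≠ 0) (hab : Nat.Coprime a b)
    (F : ℕ → ℂ) :
    ∑ d ∈ unitaryDivisors (a * b), F d
      = ∑ x ∈ (unitaryDivisors a) ×ˢ (unitaryDivisors b), F (x.1 * x.2) := by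
  have habne : a * b ≠ 0 := mul_ne_zero ha hb
  refine Finset.sum_nbij' (fun d => (Nat.gcd d a, Nat.gcd d b)) (fun x => x.1 * x.2)
    ?_ ?_ ?_ ?_ ?_
  · intro d hd
    obtain ⟨hdvd, hcop, -⟩ := mem_unitaryDivisors_iff.mp hd
    have hxy : Nat.gcd d a * Nat.gcd d b = d :=
      (Nat.gcd_mul_gcd_eq_iff_dvd_mul_of_coprime hab).mpr hdvd
    have hxa : Nat.gcd d a ∣ a := Nat.gcd_dvd_right _ _
    have hyb : Nat.gcd d b ∣ b := Nat.gcd_dvd_right _ _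
    have hquot : a / Nat.gcd d a * (b / Nat.gcd d b) = a * b / d := by
      rw [Nat.div_mul_div_comm hxa hyb, hxy]
    simp only [Finset.mem_product]
    constructor
    · refine mem_unitaryDivisors_iff.mpr ⟨hxa, ?_, ha⟩
      refine Nat.Coprime.coprime_dvd_right ?_ (Nat.Coprime.coprime_dvd_left ?_ hcop)
      · exact ⟨b / Nat.gcd d b, hquot.symm⟩
      · exact ⟨Nat.gcd d b, hxy.symm⟩
    · refine mem_unitaryDivisors_iff.mpr ⟨hyb, ?_, hb⟩
      refine Nat.Coprime.coprime_dvd_right ?_ (Nat.Coprime.coprime_dvd_left ?_ hcop)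
      · exact ⟨a / Nat.gcd d a, ((mul_comm _ _).trans hquot).symm⟩
      · exact ⟨Nat.gcd d a, ((mul_comm _ _).trans hxy).symm⟩
  · intro x hx
    simp only [Finset.mem_product] at hx
    obtain ⟨hxm, hym⟩ := hx
    obtain ⟨hxa, hxcop, -⟩ := mem_unitaryDivisors_iff.mp hxm
    obtain ⟨hyb, hycop, -⟩ := mem_unitaryDivisors_iff.mp hym
    refine mem_unitaryDivisors_iff.mpr ⟨mul_dvd_mul hxa hyb, ?_, habne⟩
    have hquot : a * b / (x.1 * x.2) = a / x.1 * (b / x.2) :=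
      (Nat.div_mul_div_comm hxa hyb).symm
    rw [hquot]
    have c1 : Nat.Coprime x.1 (b / x.2) :=
      (hab.coprime_dvd_left hxa).coprime_dvd_right (Nat.div_dvd_of_dvd hyb |>.trans dvd_rfl)
    have c2 : Nat.Coprime x.2 (a / x.1) :=
      ((hab.symm).coprime_dvd_left hyb).coprime_dvd_right (Nat.div_dvd_of_dvd hxa)
    exact (hxcop.mul_right c1).mul (c2.mul_right hycop)
  · intro d hd
    obtain ⟨hdvd, -, -⟩ := mem_unitaryDivisors_iff.mp hd
    exact (Nat.gcd_mul_gcd_eq_iff_dvd_mul_of_coprime hab).mpr hdvd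
  · intro x hx
    simp only [Finset.mem_product] at hx
    obtain ⟨hxm, hym⟩ := hx
    obtain ⟨hxa, -, -⟩ := mem_unitaryDivisors_iff.mp hxm
    obtain ⟨hyb, -, -⟩ := mem_unitaryDivisors_iff.mp hym
    have hya : Nat.Coprime x.2 a := (hab.symm.coprime_dvd_left hyb)
    have hxb : Nat.Coprime x.1 b := (hab.coprime_dvd_left hxa)
    have e1 : Nat.gcd (x.1 * x.2) a = x.1 := by
      rw [mul_comm, hya.gcd_mul_left_cancel, Nat.gcd_eq_left hxa]
    have e2 : Nat.gcd (x.1 * x.2) b = x.2 := by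
      rw [hxb.gcd_mul_left_cancel, Nat.gcd_eq_left hyb]
    show (Nat.gcd (x.1 * x.2) a, Nat.gcd (x.1 * x.2) b) = x
    rw [e1, e2]
  · intro d hd
    obtain ⟨hdvd, -, -⟩ := mem_unitaryDivisors_iff.mp hd
    show F d = F (Nat.gcd d a * Nat.gcd d b)
    rw [(Nat.gcd_mul_gcd_eq_iff_dvd_mul_of_coprime hab).mpr hdvd]

end Aux

theorem PregSum_eq_and_multiplicative (f : ℕ → ℂ) :
    (∀ n : ℕ, 1 ≤ n → ∀ t : ℤ,
        PregSum f t n = ∑ d ∈ unitaryDivisors n, f d * ramanujanSum (n / d) t) ∧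
    ((∀ n : ℕ, ∃ z : ℤ, f n = (z : ℂ)) →
      (f 1 = 1 ∧ ∀ a b : ℕ, Nat.Coprime a b → f (a * b) = f a * f b) →
      ∀ t : ℤ,
        (∀ n : ℕ, ∃ z : ℤ, PregSum f t n = (z : ℂ)) ∧
        (PregSum f t 1 = 1 ∧
          ∀ a b : ℕ, Nat.Coprime a b → PregSum f t (a * b) = PregSum f t a * PregSum f t b)) := by
  constructor
  · intro n hn t
    exact PregSum_eq f n hn t
  · intro hint hmul t
    obtain ⟨hf1, hfm⟩ := hmul
    have hP0 : PregSum f t 0 = 0 := by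
      simp [PregSum, Reg]
    have hP1 : PregSum f t 1 = 1 := by
      rw [PregSum_eq f 1 one_pos t]
      have hU1 : unitaryDivisors 1 = {1} := by
        decide
      rw [hU1]
      simp [ramanujanSum_one, hf1]
    refine ⟨?_, hP1, ?_⟩
    · intro n
      rcases Nat.eq_zero_or_pos n with hn | hn
      · exact ⟨0, by simp [hn, hP0]⟩
      · choose zf hzf using hint
        refine ⟨∑ d ∈ unitaryDivisors n, zf d * cFun t (n / d), ?_⟩
        rw [PregSum_eq f n hn t]
        push_cast
        refine Finset.sum_congr rfl fun d hd => ?_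
        obtain ⟨hdvd, -, -⟩ := mem_unitaryDivisors_iff.mp hd
        have hnd : 0 < n / d :=
          Nat.div_pos (Nat.le_of_dvd hn hdvd) (Nat.pos_of_dvd_of_pos hdvd hn)
        rw [ramanujan_eq_cFun (n / d) hnd t, hzf d]
    · intro a b hab
      rcases Nat.eq_zero_or_pos a with ha | ha
      · subst ha
        have : b = 1 := by simpa using hab
        subst this
        simp [hP0, hP1]
      rcases Nat.eq_zero_or_pos b with hb | hb
      · subst hb
        have : a = 1 := by simpa using hab
        subst this
        simp [hP0, hP1]
      rw [PregSum_eq f (a * b) (Nat.mul_pos ha hb) t, PregSum_eq f a ha t,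
        PregSum_eq f b hb t,
        unitary_prod_sum ha.ne' hb.ne' hab (fun d => f d * ramanujanSum (a * b / d) t),
        Finset.sum_mul_sum, ← Finset.sum_product']
      refine Finset.sum_congr rfl fun x hx => ?_
      simp only [Finset.mem_product] at hx
      obtain ⟨hxm, hym⟩ := hx
      obtain ⟨hxa, -, -⟩ := mem_unitaryDivisors_iff.mp hxm
      obtain ⟨hyb, -, -⟩ := mem_unitaryDivisors_iff.mp hym
      have hxy : Nat.Coprime x.1 x.2 :=
        (hab.coprime_dvd_left hxa).coprime_dvd_right hyb
      have hquot : a * b / (x.1 * x.2) = a / x.1 * (b / x.2) :=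
        (Nat.div_mul_div_comm hxa hyb).symm
      have hax : 0 < a / x.1 :=
        Nat.div_pos (Nat.le_of_dvd ha hxa) (Nat.pos_of_dvd_of_pos hxa ha)
      have hby : 0 < b / x.2 :=
        Nat.div_pos (Nat.le_of_dvd hb hyb) (Nat.pos_of_dvd_of_pos hyb hb)
      have hqco : Nat.Coprime (a / x.1) (b / x.2) :=
        (hab.coprime_dvd_left (Nat.div_dvd_of_dvd hxa)).coprime_dvd_right
          (Nat.div_dvd_of_dvd hyb)
      rw [hquot, hfm x.1 x.2 hxy, ramanujanSum_mul hax hby hqco t]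
      ring
end

section
/- For every n ∈ ℕ, Σ_{k ∈ Reg_n} gcd(k−1, n) = Σ_{d || n} φ(d) τ(d) = Π_{p^ν || n} (p^{ν−1}(p−1)(ν+1) + 1), where the middle sum runs over the unitary divisors d of n and the product runs over the prime powers p^ν exactly dividing n; φ is Euler's totient function and τ(d) is the number of divisors of d. -/
open Finset
open scoped Classical

/-! ### Auxiliary definitions -/

/-- regularity inside a commutative ring -/
def IsRegZ {R : Type*} [CommRing R] (a : R) : Prop := ∃ x : R, a ^ 2 * x = a

noncomputable def S (N : ℕ) [NeZero N] : ℕ :=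
  ∑ a ∈ Finset.univ.filter (fun a : ZMod N => IsRegZ a), Nat.gcd ((a - 1).val) N

lemma gcd_mod_left' (x n : ℕ) : Nat.gcd (x % n) n = Nat.gcd x n :=
  (Nat.gcd_rec n x).symm.trans (Nat.gcd_comm n x)

lemma isRegZ_map {R S' : Type*} [CommRing R] [CommRing S'] (e : R ≃+* S') (a : R) :
    IsRegZ (e a) ↔ IsRegZ a := by
  constructor
  · rintro ⟨x, hx⟩
    refine ⟨e.symm x, ?_⟩
    apply e.injective
    simpa [map_mul, map_pow] using hx
  · rintro ⟨x, hx⟩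
    exact ⟨e x, by rw [← map_pow, ← map_mul, hx]⟩

lemma isRegZ_prod {R S' : Type*} [CommRing R] [CommRing S'] (a : R × S') :
    IsRegZ a ↔ IsRegZ a.1 ∧ IsRegZ a.2 := by
  constructor
  · rintro ⟨x, hx⟩
    exact ⟨⟨x.1, congrArg Prod.fst hx⟩, ⟨x.2, congrArg Prod.snd hx⟩⟩
  · rintro ⟨⟨x, hx⟩, ⟨y, hy⟩⟩
    exact ⟨(x, y), Prod.ext hx hy⟩

lemma isRegularMod_iff_s10 (k N : ℕ) [NeZero N] :
    IsRegularMod k N ↔ IsRegZ (k : ZMod N) := by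
  constructor
  · rintro ⟨x, hx⟩
    refine ⟨((x : ℤ) : ZMod N), ?_⟩
    have := (ZMod.intCast_zmod_eq_zero_iff_dvd ((k:ℤ)^2 * x - k) N).2 hx
    push_cast at this
    linear_combination this
  · rintro ⟨x, hx⟩
    obtain ⟨y, hy⟩ := ZMod.intCast_surjective (n := N) x
    refine ⟨y, (ZMod.intCast_zmod_eq_zero_iff_dvd _ N).1 ?_⟩
    push_cast
    rw [hy]
    linear_combination hx

/-- Bridge: the sum over `Reg N` equals the `ZMod` sum. -/
lemma sum_reg_eq (N : ℕ) [NeZero N] :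
    ∑ k ∈ Reg N, Nat.gcd (k - 1) N = S N := by
  have hN : 0 < N := Nat.pos_of_ne_zero (NeZero.ne N)
  refine Finset.sum_nbij' (fun k => (k : ZMod N))
    (fun a => if a.val = 0 then N else a.val) ?_ ?_ ?_ ?_ ?_
  · intro k hk
    simp only [Reg, Finset.mem_filter, Finset.mem_Icc] at hk
    simp only [Finset.mem_filter, Finset.mem_univ, true_and]
    exact (isRegularMod_iff_s10 k N).1 hk.2
  · intro a ha
    simp only [Finset.mem_filter, Finset.mem_univ, true_and] at ha
    simp only [Reg, Finset.mem_filter, Finset.mem_Icc]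
    have hv : a.val < N := ZMod.val_lt a
    have hval : ((a.val : ℕ) : ZMod N) = a := by
      rw [ZMod.natCast_val, ZMod.cast_id]
    by_cases h0 : a.val = 0
    · rw [if_pos h0]
      refine ⟨⟨hN, le_refl N⟩, ?_⟩
      rw [(isRegularMod_iff_s10 N N)]
      have : ((N : ℕ) : ZMod N) = a := by
        rw [ZMod.natCast_self]
        exact ((ZMod.val_eq_zero a).1 h0).symm
      rwa [this]
    · rw [if_neg h0]
      refine ⟨⟨Nat.one_le_iff_ne_zero.2 h0, le_of_lt hv⟩, ?_⟩
      rw [(isRegularMod_iff_s10 a.val N)]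
      rwa [hval]
  · intro k hk
    simp only [Reg, Finset.mem_filter, Finset.mem_Icc] at hk
    obtain ⟨⟨h1, h2⟩, _⟩ := hk
    rw [ZMod.val_natCast]
    rcases eq_or_lt_of_le h2 with h | h
    · subst h
      simp
    · rw [Nat.mod_eq_of_lt h, if_neg (by omega)]
  · intro a ha
    by_cases h0 : a.val = 0
    · rw [if_pos h0, ZMod.natCast_self]
      exact ((ZMod.val_eq_zero a).1 h0).symm
    · rw [if_neg h0, ZMod.natCast_val, ZMod.cast_id]
  · intro k hk
    simp only [Reg, Finset.mem_filter, Finset.mem_Icc] at hk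
    obtain ⟨⟨h1, _⟩, _⟩ := hk
    have : ((k : ZMod N) - 1) = ((k - 1 : ℕ) : ZMod N) := by
      rw [Nat.cast_sub h1, Nat.cast_one]
    rw [this, ZMod.val_natCast, gcd_mod_left']

/-! ### Multiplicativity of `S` -/

lemma fst_chinese {m n : ℕ} [NeZero m] [NeZero n] (h : Nat.Coprime m n) (a : ZMod (m * n)) :
    ((ZMod.chineseRemainder h) a).1 = ZMod.castHom (dvd_mul_right m n) (ZMod m) a := by
  have : (RingHom.fst (ZMod m) (ZMod n)).comp (ZMod.chineseRemainder h).toRingHom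
      = ZMod.castHom (dvd_mul_right m n) (ZMod m) := Subsingleton.elim _ _
  exact congrFun (congrArg DFunLike.coe this) a

lemma snd_chinese {m n : ℕ} [NeZero m] [NeZero n] (h : Nat.Coprime m n) (a : ZMod (m * n)) :
    ((ZMod.chineseRemainder h) a).2 = ZMod.castHom (dvd_mul_left n m) (ZMod n) a := by
  have : (RingHom.snd (ZMod m) (ZMod n)).comp (ZMod.chineseRemainder h).toRingHom
      = ZMod.castHom (dvd_mul_left n m) (ZMod n) := Subsingleton.elim _ _
  exact congrFun (congrArg DFunLike.coe this) a

lemma val_cast_dvd {M N : ℕ} [NeZero M] [NeZero N] (hd : M ∣ N) (b : ZMod N) :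
    (ZMod.castHom hd (ZMod M) b).val = b.val % M := by
  have : ZMod.castHom hd (ZMod M) b = ((b.val : ℕ) : ZMod M) := by
    rw [ZMod.natCast_val, ZMod.castHom_apply]
  rw [this, ZMod.val_natCast]

lemma S_mul (m n : ℕ) [NeZero m] [NeZero n] (h : Nat.Coprime m n) :
    S (m * n) = S m * S n := by
  haveI : NeZero (m * n) := ⟨mul_ne_zero (NeZero.ne m) (NeZero.ne n)⟩
  classical
  rw [S, S, S, Finset.sum_filter, Finset.sum_filter, Finset.sum_filter]
  set e := ZMod.chineseRemainder h with he
  have key : ∀ a : ZMod (m * n), (if IsRegZ a then (a - 1).val.gcd (m * n) else 0)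
      = (fun p : ZMod m × ZMod n => (if IsRegZ p.1 then (p.1 - 1).val.gcd m else 0)
          * (if IsRegZ p.2 then (p.2 - 1).val.gcd n else 0)) (e.toEquiv a) := ?_
  · rw [Fintype.sum_equiv e.toEquiv _ (fun p : ZMod m × ZMod n =>
        (if IsRegZ p.1 then (p.1 - 1).val.gcd m else 0)
          * (if IsRegZ p.2 then (p.2 - 1).val.gcd n else 0)) key,
      Fintype.sum_prod_type]
    exact (Finset.sum_mul_sum (R := ℕ) Finset.univ Finset.univ
      (fun i : ZMod m => if IsRegZ i then (i - 1).val.gcd m else 0)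
      (fun j : ZMod n => if IsRegZ j then (j - 1).val.gcd n else 0)).symm
  intro a
  dsimp only
  have hreg : IsRegZ a ↔ IsRegZ (e a).1 ∧ IsRegZ (e a).2 := by
    rw [← isRegZ_prod, isRegZ_map e a]
  have hgcd : Nat.gcd ((a - 1).val) (m * n)
      = Nat.gcd (((e a).1 - 1).val) m * Nat.gcd (((e a).2 - 1).val) n := by
    have h1 : (e a).1 - 1 = (e (a - 1)).1 := by rw [map_sub, map_one]; rfl
    have h2 : (e a).2 - 1 = (e (a - 1)).2 := by rw [map_sub, map_one]; rfl
    rw [h1, h2, fst_chinese h, snd_chinese h, val_cast_dvd, val_cast_dvd,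
      gcd_mod_left', gcd_mod_left', Nat.Coprime.gcd_mul _ h]
  by_cases h1 : IsRegZ (e a).1 <;> by_cases h2 : IsRegZ (e a).2 <;>
    simp [hreg, h1, h2, hgcd]

/-! ### Menon's identity for units -/

lemma gcd_eq_sum_totient (x N : ℕ) (hN : N ≠ 0) :
    Nat.gcd x N = ∑ d ∈ N.divisors, if d ∣ x then d.totient else 0 := by
  rw [Finset.sum_ite, Finset.sum_const_zero, add_zero]
  have : N.divisors.filter (· ∣ x) = (Nat.gcd x N).divisors := by
    ext d
    simp only [Finset.mem_filter, Nat.mem_divisors]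
    constructor
    · rintro ⟨⟨hdN, _⟩, hdx⟩
      exact ⟨Nat.dvd_gcd hdx hdN, Nat.gcd_ne_zero_right hN⟩
    · rintro ⟨hd, _⟩
      exact ⟨⟨hd.trans (Nat.gcd_dvd_right x N), hN⟩, hd.trans (Nat.gcd_dvd_left x N)⟩
  rw [this, Nat.sum_totient]

lemma kernel_count (N d : ℕ) [NeZero N] (hd : d ∣ N) (hd0 : d ≠ 0) :
    d.totient * (Finset.univ.filter
      (fun u : (ZMod N)ˣ => ZMod.unitsMap hd u = 1)).card = N.totient := by
  haveI : NeZero d := ⟨hd0⟩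
  classical
  have hsurj : Function.Surjective (ZMod.unitsMap hd) := ZMod.unitsMap_surjective hd
  have hcard : Nat.card (ZMod N)ˣ
      = Nat.card (ZMod d)ˣ * Nat.card (ZMod.unitsMap hd).ker := by
    rw [Subgroup.card_eq_card_quotient_mul_card_subgroup (ZMod.unitsMap hd).ker]
    congr 1
    rw [Nat.card_congr (QuotientGroup.quotientKerEquivRange (ZMod.unitsMap hd)).toEquiv]
    rw [MonoidHom.range_eq_top.2 hsurj]
    exact Subgroup.card_top
  have hker : Nat.card (ZMod.unitsMap hd).ker
      = (Finset.univ.filter (fun u : (ZMod N)ˣ => ZMod.unitsMap hd u = 1)).card := by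
    rw [Nat.card_eq_fintype_card, ← Fintype.card_subtype]
    apply Fintype.card_congr
    exact Equiv.subtypeEquivRight (fun u => MonoidHom.mem_ker)
  rw [← ZMod.card_units_eq_totient d, ← ZMod.card_units_eq_totient N,
    ← Nat.card_eq_fintype_card, ← Nat.card_eq_fintype_card, hcard, hker]

lemma dvd_val_iff_unitsMap {N d : ℕ} [NeZero N] (hd : d ∣ N) (hd2 : 2 ≤ d)
    (u : (ZMod N)ˣ) : d ∣ ((u : ZMod N) - 1).val ↔ ZMod.unitsMap hd u = 1 := by
  haveI : NeZero d := ⟨by omega⟩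
  have h1 : ∀ b : ZMod N, (d ∣ b.val) ↔ ZMod.castHom hd (ZMod d) b = 0 := by
    intro b
    rw [show ZMod.castHom hd (ZMod d) b = ((b.val : ℕ) : ZMod d) by
      rw [ZMod.natCast_val, ZMod.castHom_apply], ZMod.natCast_eq_zero_iff]
  rw [h1, map_sub, map_one, sub_eq_zero, ZMod.unitsMap_def]
  rw [Units.ext_iff, Units.coe_map, Units.val_one]
  rfl

lemma menon_units (N : ℕ) [NeZero N] (hN2 : 2 ≤ N) :
    ∑ a ∈ Finset.univ.filter (fun a : ZMod N => IsUnit a), Nat.gcd ((a - 1).val) N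
      = N.divisors.card * N.totient := by
  classical
  -- reindex over the units type
  have step1 : ∑ a ∈ Finset.univ.filter (fun a : ZMod N => IsUnit a),
      Nat.gcd ((a - 1).val) N
      = ∑ u : (ZMod N)ˣ, Nat.gcd (((u : ZMod N) - 1).val) N := by
    refine (Finset.sum_bij (fun (u : (ZMod N)ˣ) _ => (u : ZMod N)) ?_ ?_ ?_ ?_).symm
    · intro u _
      simp [Units.isUnit]
    · intro u _ v _ huv
      exact Units.ext huv
    · intro a ha
      simp only [Finset.mem_filter, Finset.mem_univ, true_and] at ha
      exact ⟨ha.unit, Finset.mem_univ _, rfl⟩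
    · intro u _
      rfl
  rw [step1]
  have step2 : ∀ u : (ZMod N)ˣ, Nat.gcd (((u : ZMod N) - 1).val) N
      = ∑ d ∈ N.divisors, if d ∣ ((u : ZMod N) - 1).val then d.totient else 0 :=
    fun u => gcd_eq_sum_totient _ N (NeZero.ne N)
  rw [Finset.sum_congr rfl (fun u _ => step2 u), Finset.sum_comm]
  have step3 : ∀ d ∈ N.divisors,
      (∑ u : (ZMod N)ˣ, if d ∣ ((u : ZMod N) - 1).val then d.totient else 0)
        = N.totient := by
    intro d hdmem
    obtain ⟨hd, hN0⟩ := Nat.mem_divisors.1 hdmem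
    have hd0 : d ≠ 0 := by
      rintro rfl
      exact hN0 (Nat.eq_zero_of_zero_dvd hd)
    by_cases hd1 : d = 1
    · subst hd1
      simp only [Nat.one_dvd, if_true, Finset.sum_const, Nat.totient_one, smul_eq_mul,
        mul_one, Finset.card_univ]
      rw [ZMod.card_units_eq_totient]
    · have hd2 : 2 ≤ d := by omega
      have hcond : (Finset.univ.filter
            (fun u : (ZMod N)ˣ => d ∣ ((u : ZMod N) - 1).val))
          = Finset.univ.filter (fun u => ZMod.unitsMap hd u = 1) := by
        ext u
        simp [dvd_val_iff_unitsMap hd hd2 u]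
      rw [Finset.sum_ite, Finset.sum_const_zero, add_zero, Finset.sum_const,
        smul_eq_mul, hcond, mul_comm]
      exact kernel_count N d hd hd0
  rw [Finset.sum_congr rfl step3, Finset.sum_const, smul_eq_mul]

/-! ### Prime powers -/

lemma isUnit_zmod_prime_pow_iff {p ν : ℕ} (hp : p.Prime) (hν : 1 ≤ ν) (c : ZMod (p ^ ν)) :
    IsUnit c ↔ ZMod.castHom (dvd_pow_self p (by omega : ν ≠ 0)) (ZMod p) c ≠ 0 := by
  haveI : Fact p.Prime := ⟨hp⟩
  haveI : NeZero (p ^ ν) := ⟨pow_ne_zero _ hp.pos.ne'⟩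
  have hc : ((c.val : ℕ) : ZMod (p ^ ν)) = c := by rw [ZMod.natCast_val, ZMod.cast_id]
  have h1 : IsUnit c ↔ Nat.Coprime c.val (p ^ ν) := by
    conv_lhs => rw [← hc]
    exact ZMod.isUnit_iff_coprime c.val (p ^ ν)
  have h2 : ZMod.castHom (dvd_pow_self p (by omega : ν ≠ 0)) (ZMod p) c
      = ((c.val : ℕ) : ZMod p) := by rw [ZMod.natCast_val, ZMod.castHom_apply]
  rw [h1, h2, Ne, ZMod.natCast_eq_zero_iff]
  rw [Nat.coprime_pow_right_iff (by omega), Nat.coprime_comm]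
  exact hp.coprime_iff_not_dvd

lemma isRegZ_prime_pow {p ν : ℕ} (hp : p.Prime) (hν : 1 ≤ ν) (a : ZMod (p ^ ν)) :
    IsRegZ a ↔ IsUnit a ∨ a = 0 := by
  haveI : Fact p.Prime := ⟨hp⟩
  haveI : NeZero (p ^ ν) := ⟨pow_ne_zero _ hp.pos.ne'⟩
  constructor
  · rintro ⟨x, hx⟩
    by_cases ha : a = 0
    · exact Or.inr ha
    left
    by_contra hu
    set ψ := ZMod.castHom (dvd_pow_self p (by omega : ν ≠ 0)) (ZMod p) with hψ
    have hax : ¬ IsUnit (a * x) := fun h => hu (isUnit_of_mul_isUnit_left h)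
    have h1 : ψ (a * x) = 0 := by
      by_contra h
      exact hax ((isUnit_zmod_prime_pow_iff hp hν (a * x)).2 h)
    have h2 : IsUnit (a * x - 1) := by
      rw [isUnit_zmod_prime_pow_iff hp hν, map_sub, map_one, h1, zero_sub]
      intro h
      have : (1 : ZMod p) = 0 := by rwa [neg_eq_zero] at h
      exact one_ne_zero this
    have h3 : a * (a * x - 1) = 0 := by
      have : a ^ 2 * x - a = 0 := by rw [hx, sub_self]
      linear_combination this
    obtain ⟨u, hu'⟩ := h2
    apply ha
    have := congrArg (· * (↑u⁻¹ : ZMod (p ^ ν))) h3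
    simpa [← hu', mul_assoc] using this
  · rintro (ha | rfl)
    · obtain ⟨u, rfl⟩ := ha
      exact ⟨((u⁻¹ : (ZMod (p ^ ν))ˣ) : ZMod (p ^ ν)), by
        rw [sq]
        rw [mul_assoc, ← Units.val_mul, mul_inv_cancel, Units.val_one, mul_one]⟩
    · exact ⟨0, by rw [mul_zero]⟩

lemma card_divisors_prime_pow' {p : ℕ} (hp : p.Prime) (ν : ℕ) :
    (p ^ ν).divisors.card = ν + 1 := by
  rw [Nat.divisors_prime_pow hp, Finset.card_map, Finset.card_range]

lemma S_prime_pow {p ν : ℕ} (hp : p.Prime) (hν : 1 ≤ ν) :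
    haveI : NeZero (p ^ ν) := ⟨pow_ne_zero _ hp.pos.ne'⟩
    S (p ^ ν) = p ^ (ν - 1) * (p - 1) * (ν + 1) + 1 := by
  haveI : Fact p.Prime := ⟨hp⟩
  haveI : NeZero (p ^ ν) := ⟨pow_ne_zero _ hp.pos.ne'⟩
  have hN2 : 2 ≤ p ^ ν := by
    calc 2 ≤ p := hp.two_le
    _ = p ^ 1 := (pow_one p).symm
    _ ≤ p ^ ν := Nat.pow_le_pow_right hp.pos hν
  haveI : Fact (1 < p ^ ν) := ⟨by omega⟩
  classical
  have hfilter : Finset.univ.filter (fun a : ZMod (p ^ ν) => IsRegZ a)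
      = insert (0 : ZMod (p ^ ν)) (Finset.univ.filter (fun a => IsUnit a)) := by
    ext a
    simp [isRegZ_prime_pow hp hν, or_comm]
  rw [S, hfilter, Finset.sum_insert (by simp [not_isUnit_zero])]
  have h0 : Nat.gcd ((0 - 1 : ZMod (p ^ ν)).val) (p ^ ν) = 1 := by
    have : IsUnit (0 - 1 : ZMod (p ^ ν)) := by
      rw [zero_sub]
      exact isUnit_one.neg
    have hc : (((0 - 1 : ZMod (p ^ ν)).val : ℕ) : ZMod (p ^ ν)) = 0 - 1 := by
      rw [ZMod.natCast_val, ZMod.cast_id]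
    rw [← hc] at this
    exact (ZMod.isUnit_iff_coprime _ _).1 this
  rw [h0, menon_units _ hN2, card_divisors_prime_pow' hp,
    Nat.totient_prime_pow hp (by omega)]
  ring

/-! ### The regular sum as a product -/

lemma reg_sum_one : ∑ k ∈ Reg 1, Nat.gcd (k - 1) 1 = 1 := by
  have : Reg 1 = {1} := by
    ext k
    simp only [Reg, Finset.mem_filter, Finset.mem_Icc, Finset.mem_singleton]
    constructor
    · rintro ⟨⟨h1, h2⟩, _⟩; omega
    · rintro rfl
      exact ⟨⟨le_refl 1, le_refl 1⟩, ⟨1, one_dvd _⟩⟩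
  rw [this, Finset.sum_singleton]
  rfl

lemma reg_sum_zero : ∑ k ∈ Reg 0, Nat.gcd (k - 1) 0 = 0 := by
  have : Reg 0 = ∅ := by
    simp [Reg]
  rw [this, Finset.sum_empty]

lemma reg_sum_mult : ∀ x y : ℕ, Nat.Coprime x y →
    ∑ k ∈ Reg (x * y), Nat.gcd (k - 1) (x * y)
      = (∑ k ∈ Reg x, Nat.gcd (k - 1) x) * (∑ k ∈ Reg y, Nat.gcd (k - 1) y) := by
  intro x y h
  rcases eq_or_ne x 0 with rfl | hx
  · have hy : y = 1 := (Nat.coprime_zero_left y).1 h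
    subst hy
    rw [zero_mul, reg_sum_zero, reg_sum_one]
  rcases eq_or_ne y 0 with rfl | hy
  · have hx1 : x = 1 := (Nat.coprime_zero_right x).1 h
    subst hx1
    rw [one_mul, reg_sum_zero, reg_sum_one]
  haveI : NeZero x := ⟨hx⟩
  haveI : NeZero y := ⟨hy⟩
  haveI : NeZero (x * y) := ⟨mul_ne_zero hx hy⟩
  rw [sum_reg_eq, sum_reg_eq, sum_reg_eq]
  exact S_mul x y h

lemma reg_sum_eq_prod (n : ℕ) (hn : n ≠ 0) :
    ∑ k ∈ Reg n, Nat.gcd (k - 1) n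
      = ∏ p ∈ n.primeFactors,
          (p ^ (n.factorization p - 1) * (p - 1) * (n.factorization p + 1) + 1) := by
  rw [Nat.multiplicative_factorization (fun N => ∑ k ∈ Reg N, Nat.gcd (k - 1) N)
    reg_sum_mult reg_sum_one hn]
  rw [Finsupp.prod]
  rw [Nat.support_factorization]
  apply Finset.prod_congr rfl
  intro p hp
  have hpp : p.Prime := Nat.prime_of_mem_primeFactors hp
  have hkpos : 1 ≤ n.factorization p :=
    (Nat.Prime.factorization_pos_of_dvd hpp hn (Nat.dvd_of_mem_primeFactors hp))
  haveI : NeZero (p ^ n.factorization p) := ⟨pow_ne_zero _ hpp.pos.ne'⟩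
  rw [sum_reg_eq]
  exact S_prime_pow hpp hkpos

/-! ### Unitary divisors -/

lemma mem_unitaryDivisors {d n : ℕ} :
    d ∈ unitaryDivisors n ↔ d ∣ n ∧ Nat.Coprime d (n / d) ∧ n ≠ 0 := by
  simp only [unitaryDivisors, Finset.mem_filter, Nat.mem_divisors]
  tauto

lemma T_one : ∑ d ∈ unitaryDivisors 1, d.totient * d.divisors.card = 1 := by
  have : unitaryDivisors 1 = {1} := by
    ext d
    simp only [mem_unitaryDivisors, Nat.dvd_one, Finset.mem_singleton, ne_eq,
      one_ne_zero, not_false_eq_true, and_true]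
    constructor
    · rintro ⟨rfl, _⟩; rfl
    · rintro rfl; exact ⟨rfl, by simp⟩
  rw [this, Finset.sum_singleton]
  rfl

lemma T_mult : ∀ x y : ℕ, Nat.Coprime x y →
    ∑ d ∈ unitaryDivisors (x * y), d.totient * d.divisors.card
      = (∑ d ∈ unitaryDivisors x, d.totient * d.divisors.card)
        * (∑ d ∈ unitaryDivisors y, d.totient * d.divisors.card) := by
  intro m n h
  rcases eq_or_ne m 0 with rfl | hm
  · have hn : n = 1 := (Nat.coprime_zero_left n).1 h
    subst hn
    rw [zero_mul, T_one, mul_one]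
  rcases eq_or_ne n 0 with rfl | hn
  · have hm1 : m = 1 := (Nat.coprime_zero_right m).1 h
    subst hm1
    rw [one_mul, T_one, one_mul]
  rw [Finset.sum_mul_sum]
  rw [← Finset.sum_product']
  refine (Finset.sum_nbij' (fun d => (Nat.gcd d m, Nat.gcd d n)) (fun p => p.1 * p.2)
    ?_ ?_ ?_ ?_ ?_)
  · -- membership forward
    intro d hd
    rw [mem_unitaryDivisors] at hd
    obtain ⟨hdvd, hcop, _⟩ := hd
    have hgm : Nat.gcd d m ∣ m := Nat.gcd_dvd_right d m
    have hgn : Nat.gcd d n ∣ n := Nat.gcd_dvd_right d n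
    have hdd : d = Nat.gcd d m * Nat.gcd d n := by
      rw [← Nat.Coprime.gcd_mul d h, Nat.gcd_eq_left hdvd]
    have hquot : m * n / d = (m / Nat.gcd d m) * (n / Nat.gcd d n) := by
      rw [Nat.div_mul_div_comm hgm hgn, ← hdd]
    rw [Finset.mem_product, mem_unitaryDivisors, mem_unitaryDivisors]
    refine ⟨⟨hgm, ?_, hm⟩, hgn, ?_, hn⟩
    · refine Nat.Coprime.coprime_dvd_left (hdd ▸ Dvd.intro _ rfl) ?_
      refine Nat.Coprime.coprime_dvd_right ?_ hcop
      rw [hquot]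
      exact Dvd.intro _ rfl
    · refine Nat.Coprime.coprime_dvd_left (hdd ▸ Dvd.intro_left _ rfl) ?_
      refine Nat.Coprime.coprime_dvd_right ?_ hcop
      rw [hquot]
      exact Dvd.intro_left _ rfl
  · -- membership backward
    rintro ⟨a, b⟩ hp
    rw [Finset.mem_product, mem_unitaryDivisors, mem_unitaryDivisors] at hp
    obtain ⟨⟨ham, hacop, _⟩, hbn, hbcop, _⟩ := hp
    rw [mem_unitaryDivisors]
    refine ⟨mul_dvd_mul ham hbn, ?_, mul_ne_zero hm hn⟩
    rw [← Nat.div_mul_div_comm ham hbn]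
    have hab : Nat.Coprime a (n / b) :=
      Nat.Coprime.coprime_dvd_left ham
        (Nat.Coprime.coprime_dvd_right (Nat.div_dvd_of_dvd hbn) h)
    have hba : Nat.Coprime b (m / a) :=
      Nat.Coprime.coprime_dvd_left hbn
        (Nat.Coprime.coprime_dvd_right (Nat.div_dvd_of_dvd ham) h.symm)
    exact Nat.Coprime.mul (Nat.Coprime.mul_right hacop hab)
      (Nat.Coprime.mul_right hba hbcop)
  · -- left inverse
    intro d hd
    rw [mem_unitaryDivisors] at hd
    obtain ⟨hdvd, _, _⟩ := hd
    dsimp only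
    rw [← Nat.Coprime.gcd_mul d h, Nat.gcd_eq_left hdvd]
  · -- right inverse
    rintro ⟨a, b⟩ hp
    rw [Finset.mem_product, mem_unitaryDivisors, mem_unitaryDivisors] at hp
    obtain ⟨⟨ham, _, _⟩, hbn, _, _⟩ := hp
    have hbm : Nat.Coprime b m := Nat.Coprime.coprime_dvd_left hbn h.symm
    have han : Nat.Coprime a n := Nat.Coprime.coprime_dvd_left ham h
    have h1 : Nat.gcd (a * b) m = a := by
      rw [Nat.Coprime.gcd_mul_right_cancel a hbm, Nat.gcd_eq_left ham]
    have h2 : Nat.gcd (a * b) n = b := by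
      rw [Nat.Coprime.gcd_mul_left_cancel b han, Nat.gcd_eq_left hbn]
    simp [h1, h2]
  · -- values
    intro d hd
    rw [mem_unitaryDivisors] at hd
    obtain ⟨hdvd, _, _⟩ := hd
    have hab : Nat.Coprime (Nat.gcd d m) (Nat.gcd d n) :=
      Nat.Coprime.coprime_dvd_left (Nat.gcd_dvd_right d m)
        (Nat.Coprime.coprime_dvd_right (Nat.gcd_dvd_right d n) h)
    have hdd : d = Nat.gcd d m * Nat.gcd d n := by
      rw [← Nat.Coprime.gcd_mul d h, Nat.gcd_eq_left hdvd]
    dsimp only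
    conv_lhs => rw [hdd, Nat.totient_mul hab, Nat.Coprime.card_divisors_mul hab]
    ring

lemma T_prime_pow {p ν : ℕ} (hp : p.Prime) (hν : 1 ≤ ν) :
    ∑ d ∈ unitaryDivisors (p ^ ν), d.totient * d.divisors.card
      = p ^ (ν - 1) * (p - 1) * (ν + 1) + 1 := by
  have hp1 : 1 < p := hp.one_lt
  have hne : p ^ ν ≠ 1 := by
    intro hcontra
    have := Nat.one_lt_pow (by omega : ν ≠ 0) hp1
    omega
  have huD : unitaryDivisors (p ^ ν) = {p ^ ν, 1} := by
    ext d
    rw [mem_unitaryDivisors]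
    simp only [Finset.mem_insert, Finset.mem_singleton]
    constructor
    · rintro ⟨hdvd, hcop, _⟩
      obtain ⟨j, hj, rfl⟩ := (Nat.dvd_prime_pow hp).1 hdvd
      rw [Nat.pow_div hj hp.pos] at hcop
      rcases Nat.eq_zero_or_pos j with rfl | hjpos
      · right; rw [pow_zero]
      rcases eq_or_lt_of_le hj with rfl | hjlt
      · left; rfl
      · exfalso
        have h1 : p ∣ p ^ j := dvd_pow_self p (by omega)
        have h2 : p ∣ p ^ (ν - j) := dvd_pow_self p (by omega)
        have := Nat.eq_one_of_dvd_coprimes hcop h1 h2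
        omega
    · rintro (rfl | rfl)
      · exact ⟨dvd_refl _, by
          rw [Nat.div_self (pow_pos hp.pos ν)]
          exact Nat.coprime_one_right _,
          pow_ne_zero _ hp.pos.ne'⟩
      · exact ⟨one_dvd _, Nat.coprime_one_left _, pow_ne_zero _ hp.pos.ne'⟩
  rw [huD, Finset.sum_insert (by simp [hne, hp.one_lt.ne', show ν ≠ 0 by omega]), Finset.sum_singleton,
    Nat.totient_prime_pow hp (by omega), card_divisors_prime_pow' hp]
  simp [Nat.totient_one]

lemma T_eq_prod (n : ℕ) (hn : n ≠ 0) :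
    ∑ d ∈ unitaryDivisors n, d.totient * d.divisors.card
      = ∏ p ∈ n.primeFactors,
          (p ^ (n.factorization p - 1) * (p - 1) * (n.factorization p + 1) + 1) := by
  rw [Nat.multiplicative_factorization
    (fun N => ∑ d ∈ unitaryDivisors N, d.totient * d.divisors.card)
    T_mult T_one hn]
  rw [Finsupp.prod, Nat.support_factorization]
  apply Finset.prod_congr rfl
  intro p hp
  have hpp : p.Prime := Nat.prime_of_mem_primeFactors hp
  have hkpos : 1 ≤ n.factorization p :=
    Nat.Prime.factorization_pos_of_dvd hpp hn (Nat.dvd_of_mem_primeFactors hp)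
  exact T_prime_pow hpp hkpos

theorem menon_analogue_reg (n : ℕ) (hn : 1 ≤ n) :
    (∑ k ∈ Reg n, Nat.gcd (k - 1) n =
      ∑ d ∈ unitaryDivisors n, d.totient * d.divisors.card) ∧
    (∑ k ∈ Reg n, Nat.gcd (k - 1) n =
      ∏ p ∈ n.primeFactors,
        (p ^ (n.factorization p - 1) * (p - 1) * (n.factorization p + 1) + 1)) := by
  have hn0 : n ≠ 0 := by omega
  refine ⟨?_, reg_sum_eq_prod n hn0⟩
  rw [reg_sum_eq_prod n hn0, T_eq_prod n hn0]
end

section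
/- For every n ∈ ℕ, Σ_{k ∈ Reg_n} cos²(kπ/n) = (ρ(n) + μ̄(n))/2, where μ̄(n) = Σ_{d || n} μ(d) is the characteristic function of the squarefull integers (μ̄(n) = 1 if every prime dividing n divides it at least twice, and μ̄(n) = 0 otherwise). -/
open Finset Real
open scoped Classical

/-- `μ̄(n) = Σ_{d ∥ n} μ(d)`, the characteristic function of the squarefull integers. -/
def mubar (n : ℕ) : ℤ := ∑ d ∈ unitaryDivisors n, ArithmeticFunction.moebius d

/-- the standard primitive `q`-th root of unity. -/
noncomputable def zq (q : ℕ) : ℂ := Complex.exp (2 * Real.pi * Complex.I / q)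

/-- the residues in `[1,d]` coprime to `d`. -/
noncomputable def Tset (d : ℕ) : Finset ℕ :=
  (Finset.Icc 1 d).filter fun j => Nat.Coprime j d

lemma zq_pow_div {q d : ℕ} (hq : 0 < q) (hd : d ∣ q) : zq q ^ (q / d) = zq d := by
  rw [zq, zq, ← Complex.exp_nat_mul]
  congr 1
  have hq0 : (q : ℂ) ≠ 0 := Nat.cast_ne_zero.mpr hq.ne'
  rcases Nat.eq_zero_or_pos d with rfl | hdpos
  · simp at hd; omega
  have hd0' : (d : ℂ) ≠ 0 := Nat.cast_ne_zero.mpr hdpos.ne'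
  rw [Nat.cast_div hd hd0']
  field_simp

lemma sum_zq_pow (q : ℕ) (hq : 0 < q) :
    ∑ m ∈ Finset.Icc 1 q, zq q ^ m = if q = 1 then (1 : ℂ) else 0 := by
  have hprim : IsPrimitiveRoot (zq q) q := Complex.isPrimitiveRoot_exp q hq.ne'
  have h1 : ∑ m ∈ Finset.Icc 1 q, zq q ^ m = zq q * ∑ i ∈ Finset.range q, zq q ^ i := by
    rw [Finset.mul_sum]
    rw [← Finset.Ico_add_one_right_eq_Icc, Finset.sum_Ico_eq_sum_range]
    simp only [Nat.add_sub_cancel, Nat.succ_sub_one]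
    apply Finset.sum_congr rfl
    intro i _
    rw [pow_add, pow_one]
    try ring
  rcases eq_or_lt_of_le (show 1 ≤ q from hq) with h | h
  · simp only [← h, Finset.Icc_self, Finset.sum_singleton, pow_one, if_pos rfl, zq]
    rw [show (2 * (Real.pi:ℂ) * Complex.I / ((1:ℕ):ℂ)) = (2 * Real.pi) * Complex.I by push_cast; ring]
    rw [Complex.exp_mul_I]
    simp [Real.cos_two_pi, Real.sin_two_pi, ← Complex.ofReal_cos, ← Complex.ofReal_sin]
  · rw [h1, hprim.geom_sum_eq_zero h, mul_zero, if_neg (by omega)]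

lemma sum_Icc_partition {M : Type*} [AddCommMonoid M] (q : ℕ) (hq : 0 < q) (f : ℕ → M) :
    ∑ m ∈ Finset.Icc 1 q, f m
      = ∑ d ∈ q.divisors, ∑ j ∈ Tset d, f (q / d * j) := by
  rw [Finset.sum_sigma']
  refine Finset.sum_nbij' (i := fun m => ⟨q / Nat.gcd m q, m / Nat.gcd m q⟩)
    (j := fun x => q / x.1 * x.2) ?_ ?_ ?_ ?_ ?_
  · rintro m hm
    simp only [Finset.mem_Icc] at hm
    obtain ⟨hm1, hm2⟩ := hm
    have hg : 0 < Nat.gcd m q := Nat.gcd_pos_of_pos_right _ hq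
    have hgq : Nat.gcd m q ∣ q := Nat.gcd_dvd_right m q
    have hgm : Nat.gcd m q ∣ m := Nat.gcd_dvd_left m q
    refine Finset.mem_sigma.mpr ⟨?_, ?_⟩
    · exact Nat.mem_divisors.mpr ⟨Nat.div_dvd_of_dvd hgq, hq.ne'⟩
    · simp only [Tset, Finset.mem_filter, Finset.mem_Icc]
      refine ⟨⟨Nat.one_le_div_iff hg |>.mpr (Nat.le_of_dvd (by omega) hgm), ?_⟩, ?_⟩
      · exact Nat.div_le_div_right hm2
      · exact Nat.coprime_div_gcd_div_gcd hg
  · rintro ⟨d, j⟩ hx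
    simp only [Finset.mem_sigma, Nat.mem_divisors, Tset, Finset.mem_filter,
      Finset.mem_Icc] at hx
    obtain ⟨⟨hd, -⟩, ⟨hj1, hj2⟩, -⟩ := hx
    have hqd : 0 < q / d := Nat.div_pos (Nat.le_of_dvd hq hd) (by
      rcases Nat.eq_zero_or_pos d with rfl | h; · simp at hd; omega
      · exact h)
    simp only [Finset.mem_Icc]
    constructor
    · exact Nat.one_le_iff_ne_zero.mpr (by positivity)
    · calc q / d * j ≤ q / d * d := Nat.mul_le_mul_left _ hj2
        _ ≤ q := Nat.div_mul_le_self q d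
  · rintro m hm
    simp only [Finset.mem_Icc] at hm
    have hg : 0 < Nat.gcd m q := Nat.gcd_pos_of_pos_right _ hq
    have hgq : Nat.gcd m q ∣ q := Nat.gcd_dvd_right m q
    have hgm : Nat.gcd m q ∣ m := Nat.gcd_dvd_left m q
    simp only
    rw [Nat.div_div_self hgq hq.ne', Nat.mul_div_cancel' hgm]
  · rintro ⟨d, j⟩ hx
    simp only [Finset.mem_sigma, Nat.mem_divisors, Tset, Finset.mem_filter,
      Finset.mem_Icc] at hx
    obtain ⟨⟨hd, -⟩, ⟨hj1, hj2⟩, hcop⟩ := hx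
    have hd0 : 0 < d := by
      rcases Nat.eq_zero_or_pos d with rfl | h; · simp at hd; omega
      · exact h
    have hgcd : Nat.gcd (q / d * j) q = q / d := by
      have h := Nat.gcd_mul_left (q / d) j d
      rw [Nat.div_mul_cancel hd] at h
      rw [h, Nat.Coprime.gcd_eq_one hcop, mul_one]
    have hqd : 0 < q / d := Nat.div_pos (Nat.le_of_dvd hq hd) hd0
    simp only [hgcd]
    have h1 : q / (q / d) = d := Nat.div_div_self hd hq.ne'
    have h2 : q / d * j / (q / d) = j := Nat.mul_div_cancel_left j hqd
    simp [h1, h2]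
  · intro m hm
    simp only [Finset.mem_Icc] at hm
    have hg : 0 < Nat.gcd m q := Nat.gcd_pos_of_pos_right _ hq
    have hgq : Nat.gcd m q ∣ q := Nat.gcd_dvd_right m q
    have hgm : Nat.gcd m q ∣ m := Nat.gcd_dvd_left m q
    rw [Nat.div_div_self hgq hq.ne', Nat.mul_div_cancel' hgm]

lemma sum_coprime_zq (d : ℕ) (hd : 0 < d) :
    ∑ j ∈ Tset d, zq d ^ j = (ArithmeticFunction.moebius d : ℂ) := by
  have key : ∀ q > 0, ∑ e ∈ Nat.divisors q, (∑ j ∈ Tset e, zq e ^ j)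
      = (fun q => if q = 1 then (1:ℂ) else 0) q := by
    intro q hq
    simp only []
    rw [← sum_zq_pow q hq, sum_Icc_partition q hq (fun m => zq q ^ m)]
    apply Finset.sum_congr rfl
    intro e he
    rw [Nat.mem_divisors] at he
    apply Finset.sum_congr rfl
    intro j _
    rw [pow_mul, zq_pow_div hq he.1]
  have := (ArithmeticFunction.sum_eq_iff_sum_smul_moebius_eq
    (f := fun e => ∑ j ∈ Tset e, zq e ^ j)
    (g := fun q => if q = 1 then (1:ℂ) else 0)).mp key d hd
  rw [← this]
  rw [Finset.sum_eq_single (⟨d, 1⟩ : ℕ × ℕ)]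
  · simp
  · rintro ⟨a, b⟩ hab hne
    rw [Nat.mem_divisorsAntidiagonal] at hab
    have hb : b ≠ 1 := by
      rintro rfl
      exact hne (by simp [Prod.ext_iff]; omega)
    simp [hb]
  · intro h
    exact absurd (Nat.mem_divisorsAntidiagonal.mpr ⟨by simp, hd.ne'⟩) h

lemma regular_iff {n k : ℕ} (hn : 0 < n) :
    IsRegularMod k n ↔ Nat.Coprime (Nat.gcd k n) (n / Nat.gcd k n) := by
  set d := Nat.gcd k n with hd
  have hdn : d ∣ n := Nat.gcd_dvd_right k n
  have hdk : d ∣ k := Nat.gcd_dvd_left k n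
  have hdpos : 0 < d := Nat.gcd_pos_of_pos_right _ hn
  set n' := n / d with hn'
  set k' := k / d with hk'
  have hnn : n = d * n' := (Nat.mul_div_cancel' hdn).symm
  have hkk : k = d * k' := (Nat.mul_div_cancel' hdk).symm
  have hcop' : Nat.Coprime k' n' := by
    have := Nat.coprime_div_gcd_div_gcd (m := k) (n := n) hdpos
    exact this
  constructor
  · rintro ⟨x, hx⟩
    by_contra hc
    set p := (Nat.gcd d n').minFac with hp
    have hg1 : Nat.gcd d n' ≠ 1 := hc
    have hpp : p.Prime := Nat.minFac_prime hg1
    have hpd : p ∣ d := (Nat.minFac_dvd _).trans (Nat.gcd_dvd_left _ _)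
    have hpn' : p ∣ n' := (Nat.minFac_dvd _).trans (Nat.gcd_dvd_right _ _)
    have hfac : (k : ℤ) ^ 2 * x - k = (d : ℤ) * (k' * ((k : ℤ) * x - 1)) := by
      rw [hkk]; push_cast; ring
    have hdvd : (n' : ℤ) ∣ (k' : ℤ) * ((k : ℤ) * x - 1) := by
      have h2 : (d : ℤ) * n' ∣ (d : ℤ) * (k' * ((k : ℤ) * x - 1)) := by
        rw [← hfac]
        calc ((d : ℤ) * n') ∣ (n : ℤ) := by rw [hnn]; push_cast; exact dvd_rfl
          _ ∣ _ := hx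
      exact (mul_dvd_mul_iff_left (by exact_mod_cast hdpos.ne' : (d:ℤ) ≠ 0)).mp h2
    have hpdvd : (p : ℤ) ∣ (k' : ℤ) * ((k : ℤ) * x - 1) :=
      dvd_trans (Int.natCast_dvd_natCast.mpr hpn') hdvd
    rcases (Int.Prime.dvd_mul' hpp hpdvd) with h | h
    · have : p ∣ k' := Int.natCast_dvd_natCast.mp h
      have : p ∣ Nat.gcd k' n' := Nat.dvd_gcd this hpn'
      rw [Nat.Coprime.gcd_eq_one hcop'] at this
      have h1 := Nat.le_of_dvd one_pos this
      have h2 := hpp.two_le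
      omega
    · have hpk : (p : ℤ) ∣ (k : ℤ) :=
        Int.natCast_dvd_natCast.mpr (hpd.trans hdk)
      have : (p : ℤ) ∣ 1 := by
        have h1 : (p : ℤ) ∣ (k : ℤ) * x := hpk.mul_right x
        have := dvd_sub h1 h
        simpa using this
      have h1 : p ≤ 1 := by exact_mod_cast Int.le_of_dvd one_pos this
      have h2 := hpp.two_le
      omega
  · intro hcop
    have hck : Nat.Coprime k n' := by
      rw [hkk]
      exact (Nat.Coprime.mul (hcop) hcop')
    have : IsCoprime (k : ℤ) (n' : ℤ) := by
      rw [Int.isCoprime_iff_gcd_eq_one]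
      simpa using hck
    obtain ⟨u, v, huv⟩ := this
    refine ⟨u, ?_⟩
    refine ⟨-(v * k'), ?_⟩
    have hkZ : (k : ℤ) = d * k' := by exact_mod_cast hkk
    have hnZ : (n : ℤ) = d * n' := by exact_mod_cast hnn
    rw [hnZ]
    rw [hkZ] at huv ⊢
    linear_combination ((d : ℤ) * k') * huv

lemma sum_reg_zq (n : ℕ) (hn : 0 < n) :
    ∑ k ∈ Reg n, zq n ^ k = (mubar n : ℂ) := by
  have h1 : ∑ k ∈ Reg n, zq n ^ k
      = ∑ k ∈ Finset.Icc 1 n, (if IsRegularMod k n then zq n ^ k else 0) := by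
    rw [Reg, Finset.sum_filter]
  rw [h1, sum_Icc_partition n hn (fun k => if IsRegularMod k n then zq n ^ k else 0)]
  have h2 : ∀ d ∈ n.divisors,
      (∑ j ∈ Tset d, (if IsRegularMod (n / d * j) n then zq n ^ (n / d * j) else 0))
        = if Nat.Coprime d (n / d) then (ArithmeticFunction.moebius d : ℂ) else 0 := by
    intro d hd
    rw [Nat.mem_divisors] at hd
    obtain ⟨hd, -⟩ := hd
    have hd0 : 0 < d := by
      rcases Nat.eq_zero_or_pos d with rfl | h
      · rw [Nat.zero_dvd] at hd; omega
      · exact h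
    have step : ∀ j ∈ Tset d,
        (if IsRegularMod (n / d * j) n then zq n ^ (n / d * j) else 0)
          = if Nat.Coprime d (n / d) then zq d ^ j else 0 := by
      intro j hj
      simp only [Tset, Finset.mem_filter, Finset.mem_Icc] at hj
      obtain ⟨⟨hj1, hj2⟩, hcop⟩ := hj
      have hgcd : Nat.gcd (n / d * j) n = n / d := by
        have h := Nat.gcd_mul_left (n / d) j d
        rw [Nat.div_mul_cancel hd] at h
        rw [h, Nat.Coprime.gcd_eq_one hcop, mul_one]
      have hiff : IsRegularMod (n / d * j) n ↔ Nat.Coprime d (n / d) := by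
        rw [regular_iff hn, hgcd, Nat.div_div_self hd hn.ne']
        exact Nat.coprime_comm
      rw [pow_mul, zq_pow_div hn hd]
      by_cases hc : Nat.Coprime d (n / d)
      · rw [if_pos (hiff.mpr hc), if_pos hc]
      · rw [if_neg (fun h => hc (hiff.mp h)), if_neg hc]
    rw [Finset.sum_congr rfl step]
    by_cases hc : Nat.Coprime d (n / d)
    · simp only [if_pos hc]
      exact sum_coprime_zq d hd0
    · simp [if_neg hc]
  rw [Finset.sum_congr rfl h2, ← Finset.sum_filter]
  rw [mubar, unitaryDivisors]
  push_cast
  rfl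

theorem sum_cos_sq_reg (n : ℕ) (hn : 1 ≤ n) :
    ∑ k ∈ Reg n, Real.cos (k * Real.pi / n) ^ 2 =
      (((Reg n).card : ℝ) + (mubar n : ℝ)) / 2 := by
  have hn0 : 0 < n := hn
  have hre : ∀ k : ℕ, (zq n ^ k).re = Real.cos (2 * Real.pi * k / n) := by
    intro k
    have : zq n ^ k = Complex.exp (((2 * Real.pi * k / n : ℝ) : ℂ) * Complex.I) := by
      rw [zq, ← Complex.exp_nat_mul]
      congr 1
      push_cast
      ring
    rw [this, Complex.exp_ofReal_mul_I_re]
  have hterm : ∀ k : ℕ, Real.cos (k * Real.pi / n) ^ 2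
      = 1 / 2 + (zq n ^ k).re / 2 := by
    intro k
    rw [hre, Real.cos_sq]
    congr 2
    ring
  calc ∑ k ∈ Reg n, Real.cos (k * Real.pi / n) ^ 2
      = ∑ k ∈ Reg n, (1 / 2 + (zq n ^ k).re / 2) := by
        exact Finset.sum_congr rfl fun k _ => hterm k
    _ = ((Reg n).card : ℝ) * (1 / 2) + (∑ k ∈ Reg n, (zq n ^ k).re) / 2 := by
        rw [Finset.sum_add_distrib, Finset.sum_const, Finset.sum_div]
        simp [mul_comm]
    _ = (((Reg n).card : ℝ) + (mubar n : ℝ)) / 2 := by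
        have : ∑ k ∈ Reg n, (zq n ^ k).re = ((mubar n : ℂ)).re := by
          rw [← Complex.re_sum, sum_reg_zq n hn0]
        rw [this]
        simp [Complex.intCast_re]
        ring
end

section
/- For every odd n ∈ ℕ, Σ_{k ∈ Reg_n} tan²(kπ/n) = ρ_2(n) − ρ(n), where ρ_s(n) = Σ_{d || n} φ_s(d) with φ_s(n) = Σ_{d|n} d^s μ(n/d), and ρ(n) = ρ_1(n) = #Reg_n. -/
open Finset Real
open scoped Classical

/-- The Jordan function `φ_s(n) = Σ_{d ∣ n} d^s μ(n/d)` for `s ∈ ℕ`. -/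
def phiInt (s n : ℕ) : ℤ :=
  ∑ d ∈ n.divisors, ArithmeticFunction.moebius (n / d) * (d : ℤ) ^ s

/-- `ρ_s(n) = Σ_{d ∥ n} φ_s(d)`, the sum over the unitary divisors of `n`. -/
def rhoInt (s n : ℕ) : ℤ := ∑ d ∈ unitaryDivisors n, phiInt s d

section Core

open Complex

lemma orth (m : ℕ) (hm : 0 < m) (j : ℕ) :
    ∑ a ∈ range m, Complex.exp (2 * π * I / m) ^ (j * a) =
      if m ∣ j then (m : ℂ) else 0 := by
  have hζ : IsPrimitiveRoot (Complex.exp (2 * π * I / m)) m :=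
    Complex.isPrimitiveRoot_exp m hm.ne'
  set ζ := Complex.exp (2 * π * I / m)
  have h1 : ∀ a, ζ ^ (j * a) = (ζ ^ j) ^ a := fun a => pow_mul ζ j a
  simp only [h1]
  by_cases hd : m ∣ j
  · have : ζ ^ j = 1 := (hζ.pow_eq_one_iff_dvd j).mpr hd
    simp [this, hd]
  · have hne : ζ ^ j ≠ 1 := fun h => hd ((hζ.pow_eq_one_iff_dvd j).mp h)
    rw [geom_sum_eq hne]
    have : (ζ ^ j) ^ m = 1 := by
      rw [← pow_mul, mul_comm, pow_mul, hζ.pow_eq_one, one_pow]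
    simp [this, hd]

lemma one_add_exp (θ : ℝ) :
    1 + Complex.exp (2 * θ * I) = 2 * Real.cos θ * Complex.exp (θ * I) := by
  have h := Complex.two_cos (x := (θ : ℂ))
  have : (2 : ℂ) * Complex.cos θ * Complex.exp (θ * I) =
      (Complex.exp (θ * I) + Complex.exp (-θ * I)) * Complex.exp (θ * I) := by rw [h]
  rw [Complex.ofReal_cos, this, add_mul, ← Complex.exp_add, ← Complex.exp_add,
    show (θ:ℂ) * I + θ * I = 2 * θ * I by ring, show -(θ:ℂ) * I + θ * I = 0 by ring]
  simp [add_comm]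

lemma sec_core (m : ℕ) (hm : 0 < m) (hodd : Odd m) (a : ℕ) :
    Real.cos (a * π / m) ≠ 0 ∧
    ((1 / Real.cos (a * π / m) ^ 2 : ℝ) : ℂ) =
      Complex.exp (2 * π * I / m) ^ a *
        (∑ k ∈ range m, (-1 : ℂ) ^ k * Complex.exp (2 * π * I / m) ^ (a * k)) ^ 2 := by
  set ζ := Complex.exp (2 * π * I / m) with hζdef
  set θ : ℝ := a * π / m with hθdef
  have hm0 : (m : ℂ) ≠ 0 := by exact_mod_cast hm.ne'
  have hz : ζ ^ a = Complex.exp (2 * θ * I) := by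
    rw [hζdef, ← Complex.exp_nat_mul]
    congr 1
    have : (θ : ℂ) = (a : ℂ) * π / m := by push_cast [hθdef]; ring
    rw [this]
    field_simp
  have hS : ∀ k, (-1 : ℂ) ^ k * ζ ^ (a * k) = (-(ζ ^ a)) ^ k := by
    intro k
    rw [neg_pow, pow_mul]
    ring
  set S := ∑ k ∈ range m, (-1 : ℂ) ^ k * ζ ^ (a * k) with hSdef
  have hζm : ζ ^ m = 1 := by
    rw [hζdef, ← Complex.exp_nat_mul]
    rw [show (m : ℂ) * (2 * π * I / m) = 2 * π * I by field_simp]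
    exact Complex.exp_two_pi_mul_I
  have h2 : (1 + ζ ^ a) * S = 2 := by
    have hg := geom_sum_mul (-(ζ ^ a)) m
    have hsm : S = ∑ i ∈ range m, (-(ζ ^ a)) ^ i := by
      rw [hSdef]; exact Finset.sum_congr rfl fun k _ => hS k
    have hpow : (-(ζ ^ a)) ^ m = -1 := by
      rw [hodd.neg_pow, ← pow_mul, mul_comm a m, pow_mul, hζm, one_pow]
    rw [hpow] at hg
    have := hg
    rw [← hsm] at this
    linear_combination -this
  have h3 : 1 + ζ ^ a = 2 * Real.cos θ * Complex.exp (θ * I) := by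
    rw [hz]; exact one_add_exp θ
  have h4 : (Real.cos θ : ℂ) * (Complex.exp (θ * I) * S) = 1 := by
    have h2' := h2
    rw [h3] at h2'
    linear_combination (1/2 : ℂ) * h2'
  have hcos : Real.cos θ ≠ 0 := by
    intro h
    rw [h] at h4
    simp at h4
  refine ⟨hcos, ?_⟩
  have h5 : (Real.cos θ : ℂ) ^ 2 * (ζ ^ a * S ^ 2) = 1 := by
    have h6 : ((Real.cos θ : ℂ) * (Complex.exp (θ * I) * S)) ^ 2 = 1 := by rw [h4]; ring
    have h7 : Complex.exp (θ * I) ^ 2 = ζ ^ a := by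
      rw [hz, ← Complex.exp_nat_mul]; congr 1; ring
    calc (Real.cos θ : ℂ) ^ 2 * (ζ ^ a * S ^ 2)
        = ((Real.cos θ : ℂ) * (Complex.exp (θ * I) * S)) ^ 2 := by rw [← h7]; ring
      _ = 1 := h6
  have hcosC : (Real.cos θ : ℂ) ≠ 0 := by exact_mod_cast hcos
  have hc : ((1 / Real.cos θ ^ 2 : ℝ) : ℂ) = 1 / (Real.cos θ : ℂ) ^ 2 := by push_cast; ring
  rw [hc]
  rw [div_eq_iff (pow_ne_zero 2 hcosC)]
  linear_combination -h5

lemma sum_sec (m : ℕ) (hm : 0 < m) (hodd : Odd m) :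
    ∑ a ∈ range m, (1 / Real.cos (a * π / m) ^ 2 : ℝ) = (m : ℝ) ^ 2 := by
  apply Complex.ofReal_injective
  set ζ := Complex.exp (2 * π * I / m) with hζdef
  rw [Complex.ofReal_sum]
  have step1 : (∑ a ∈ range m, ((1 / Real.cos (a * π / m) ^ 2 : ℝ) : ℂ)) =
      ∑ a ∈ range m, ζ ^ a * (∑ k ∈ range m, (-1 : ℂ) ^ k * ζ ^ (a * k)) ^ 2 := by
    refine Finset.sum_congr rfl fun a _ => ?_
    exact (sec_core m hm hodd a).2
  have expand : ∀ a : ℕ, ζ ^ a * (∑ k ∈ range m, (-1 : ℂ) ^ k * ζ ^ (a * k)) ^ 2 =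
      ∑ k ∈ range m, ∑ l ∈ range m, (-1 : ℂ) ^ (k + l) * ζ ^ ((1 + k + l) * a) := by
    intro a
    rw [sq, Finset.sum_mul_sum, Finset.mul_sum]
    refine Finset.sum_congr rfl fun k _ => ?_
    rw [Finset.mul_sum]
    refine Finset.sum_congr rfl fun l _ => ?_
    rw [show (1 + k + l) * a = a + a * k + a * l by ring, pow_add, pow_add, pow_add]
    ring
  have step2 : (∑ a ∈ range m, ζ ^ a * (∑ k ∈ range m, (-1 : ℂ) ^ k * ζ ^ (a * k)) ^ 2) =
      ∑ k ∈ range m, ∑ l ∈ range m, (-1 : ℂ) ^ (k + l) *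
        (if m ∣ 1 + k + l then (m : ℂ) else 0) := by
    simp only [expand]
    rw [Finset.sum_comm]
    refine Finset.sum_congr rfl fun k _ => ?_
    rw [Finset.sum_comm]
    refine Finset.sum_congr rfl fun l _ => ?_
    rw [← Finset.mul_sum, orth m hm (1 + k + l)]
  have inner : ∀ k ∈ range m, (∑ l ∈ range m, (-1 : ℂ) ^ (k + l) *
      (if m ∣ 1 + k + l then (m : ℂ) else 0)) = (m : ℂ) := by
    intro k hk
    rw [Finset.mem_range] at hk
    have hkle : k ≤ m - 1 := Nat.le_pred_of_lt hk
    rw [Finset.sum_eq_single_of_mem (m - 1 - k)]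
    · have hkl : k + (m - 1 - k) = m - 1 := by omega
      have hdvd : m ∣ 1 + k + (m - 1 - k) := by
        have : 1 + k + (m - 1 - k) = m := by omega
        rw [this]
      rw [if_pos hdvd, hkl]
      have heven : Even (m - 1) := Nat.Odd.sub_odd hodd odd_one
      rw [heven.neg_one_pow, one_mul]
    · rw [Finset.mem_range]; omega
    · intro l hl hne
      rw [Finset.mem_range] at hl
      have : ¬ m ∣ 1 + k + l := by
        intro hdvd
        rcases hdvd with ⟨c, hc⟩
        have hc0 : c ≠ 0 := by rintro rfl; omega
        have hc2 : c < 2 := by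
          by_contra h
          push_neg at h
          have := Nat.mul_le_mul_left m h
          omega
        have : c = 1 := by omega
        subst this
        omega
      rw [if_neg this, mul_zero]
  rw [step1, step2, Finset.sum_congr rfl inner, Finset.sum_const, Finset.card_range]
  push_cast
  ring

lemma tan_sq_eq {x : ℝ} (h : Real.cos x ≠ 0) :
    Real.tan x ^ 2 = 1 / Real.cos x ^ 2 - 1 := by
  rw [Real.tan_eq_sin_div_cos, div_pow, Real.sin_sq]
  field_simp

lemma sum_tan_Icc (m : ℕ) (hm : 0 < m) (hodd : Odd m) :
    ∑ k ∈ Icc 1 m, Real.tan (k * π / m) ^ 2 = (m : ℝ) ^ 2 - m := by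
  set f : ℕ → ℝ := fun k => Real.tan (k * π / m) ^ 2 with hf
  have hm0 : (m : ℝ) ≠ 0 := Nat.cast_ne_zero.mpr hm.ne'
  have hf0 : f 0 = 0 := by simp [hf]
  have hfm : f m = 0 := by
    simp only [hf]
    rw [show (m : ℝ) * π / m = π by field_simp, Real.tan_pi]
    norm_num
  have hIcc : ∑ k ∈ Icc 1 m, f k = ∑ k ∈ range m, f k := by
    have h1 : ∑ i ∈ Icc 1 m, f i = ∑ i ∈ range (m + 1 - 1), f (1 + i) := by
      rw [← Finset.Ico_add_one_right_eq_Icc]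
      exact Finset.sum_Ico_eq_sum_range f 1 (m + 1)
    have h2 : ∑ i ∈ range (m + 1), f i = (∑ i ∈ range m, f (i + 1)) + f 0 :=
      Finset.sum_range_succ' f m
    have h3 : ∑ i ∈ range (m + 1), f i = (∑ i ∈ range m, f i) + f m :=
      Finset.sum_range_succ f m
    have h4 : ∑ i ∈ range (m + 1 - 1), f (1 + i) = ∑ i ∈ range m, f (i + 1) := by
      simp [add_comm]
    rw [h1, h4]
    have := h2.symm.trans h3
    rw [hf0, hfm, add_zero, add_zero] at this
    exact this
  have hcos : ∀ a : ℕ, Real.cos (a * π / m) ≠ 0 := fun a => (sec_core m hm hodd a).1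
  have : ∑ k ∈ range m, f k = ∑ k ∈ range m, (1 / Real.cos (k * π / m) ^ 2 - 1) :=
    Finset.sum_congr rfl fun k _ => tan_sq_eq (hcos k)
  rw [hIcc, this, Finset.sum_sub_distrib, sum_sec m hm hodd, Finset.sum_const,
    Finset.card_range]
  simp

end Core

lemma regular_iff_gcd_unitary {k n : ℕ} (hn : 0 < n) (hk : 0 < k) :
    IsRegularMod k n ↔ Nat.Coprime (Nat.gcd k n) (n / Nat.gcd k n) := by
  set d := Nat.gcd k n with hd
  have hdpos : 0 < d := Nat.gcd_pos_of_pos_left n hk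
  have hdk : d ∣ k := Nat.gcd_dvd_left k n
  have hdn : d ∣ n := Nat.gcd_dvd_right k n
  set m := n / d with hm
  have hnm : n = d * m := (Nat.div_mul_cancel hdn).symm.trans (mul_comm _ _)
  have hcop : Nat.Coprime (k / d) m := Nat.coprime_div_gcd_div_gcd hdpos
  obtain ⟨c, hc⟩ := hdk
  have hcd : k / d = c := by rw [hc, Nat.mul_div_cancel_left c hdpos]
  rw [hcd] at hcop
  constructor
  · rintro ⟨x, hx⟩
    have h1 : (d : ℤ) * m ∣ (d : ℤ) * (c * ((k : ℤ) * x - 1)) := by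
      have : (k : ℤ) ^ 2 * x - k = (d : ℤ) * (c * ((k : ℤ) * x - 1)) := by
        have : (k : ℤ) = (d : ℤ) * c := by exact_mod_cast hc
        rw [this]; ring
      rw [← this]
      have hx' := hx
      rw [hnm] at hx'
      exact_mod_cast hx'
    have h2 : (m : ℤ) ∣ c * ((k : ℤ) * x - 1) := by
      rcases h1 with ⟨t, ht⟩
      refine ⟨t, ?_⟩
      have hd0 : (d : ℤ) ≠ 0 := by exact_mod_cast hdpos.ne'
      exact mul_left_cancel₀ hd0 (by push_cast at ht ⊢; linarith [ht])
    have h3 : (m : ℤ) ∣ (k : ℤ) * x - 1 := by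
      have hcop' : IsCoprime (c : ℤ) (m : ℤ) := by
        rw [Int.isCoprime_iff_gcd_eq_one]
        exact_mod_cast hcop
      exact (IsCoprime.dvd_of_dvd_mul_left hcop'.symm h2)
    have h4 : (Nat.gcd d m : ℤ) ∣ 1 := by
      have hg1 : (Nat.gcd d m : ℤ) ∣ (k : ℤ) * x := by
        exact Dvd.dvd.mul_right
          (Int.natCast_dvd_natCast.mpr ((Nat.gcd_dvd_left d m).trans ⟨c, hc⟩)) x
      have hg2 : (Nat.gcd d m : ℤ) ∣ (k : ℤ) * x - 1 :=
        (Int.natCast_dvd_natCast.mpr (Nat.gcd_dvd_right d m)).trans h3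
      have := dvd_sub hg1 hg2
      simpa using this
    have : Nat.gcd d m = 1 := by
      have := Int.eq_one_of_dvd_one (by positivity) h4
      exact_mod_cast this
    exact this
  · intro hco
    have hkm : Nat.Coprime k m := by
      rw [hc]
      exact Nat.Coprime.mul hco hcop
    have : IsCoprime (k : ℤ) (m : ℤ) := by
      rw [Int.isCoprime_iff_gcd_eq_one]
      exact_mod_cast hkm
    obtain ⟨x, y, hxy⟩ := this
    refine ⟨x, ?_⟩
    have hknz : (k : ℤ) ^ 2 * x - k = (k : ℤ) * ((k : ℤ) * x - 1) := by ring
    rw [hknz]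
    have : (k : ℤ) * x - 1 = -(y * m) := by linarith [hxy]
    rw [this, hnm]
    push_cast
    have : (d : ℤ) * c * -(y * m) = (d : ℤ) * m * (-(c * y)) := by ring
    rw [show ((k : ℕ) : ℤ) = (d : ℤ) * c by exact_mod_cast hc, this]
    exact Dvd.intro _ rfl

lemma sum_gcd_fiber {M : Type*} [AddCommMonoid M] (m : ℕ) (hm : 0 < m) (D : Finset ℕ)
    (hD : ∀ d ∈ D, d ∣ m) (f : ℕ → M) :
    ∑ k ∈ (Icc 1 m).filter (fun k => Nat.gcd k m ∈ D), f k =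
      ∑ d ∈ D, ∑ a ∈ (Icc 1 (m / d)).filter (fun a => a.Coprime (m / d)), f (d * a) := by
  rw [← Finset.sum_fiberwise_of_maps_to (g := fun k => Nat.gcd k m)
      (t := D) (fun k hk => (Finset.mem_filter.mp hk).2) f]
  refine Finset.sum_congr rfl fun d hd => ?_
  have hdm : d ∣ m := hD d hd
  have hdpos : 0 < d := Nat.pos_of_dvd_of_pos hdm hm
  have hde : d * (m / d) = m := Nat.mul_div_cancel' hdm
  refine Finset.sum_nbij' (fun k => k / d) (fun a => d * a) ?_ ?_ ?_ ?_ ?_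
  · intro k hk
    simp only [Finset.mem_filter, Finset.mem_Icc] at hk ⊢
    obtain ⟨⟨⟨hk1, hk2⟩, -⟩, hgcd⟩ := hk
    have hdk : d ∣ k := hgcd ▸ Nat.gcd_dvd_left k m
    refine ⟨⟨Nat.one_le_div_iff hdpos |>.mpr (Nat.le_of_dvd (by omega) hdk),
      Nat.div_le_div_right hk2⟩, ?_⟩
    have := Nat.coprime_div_gcd_div_gcd (m := k) (n := m) (by rw [hgcd]; exact hdpos)
    rw [hgcd] at this
    exact this
  · intro a ha
    simp only [Finset.mem_filter, Finset.mem_Icc] at ha ⊢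
    obtain ⟨⟨ha1, ha2⟩, hacop⟩ := ha
    have hgcd : Nat.gcd (d * a) m = d := by
      conv_lhs => rw [← hde]
      rw [Nat.gcd_mul_left, Nat.Coprime.gcd_eq_one hacop, mul_one]
    have hle : d * a ≤ m := by
      calc d * a ≤ d * (m / d) := Nat.mul_le_mul_left d ha2
        _ = m := hde
    exact ⟨⟨⟨Nat.one_le_iff_ne_zero.mpr (by positivity), hle⟩, by rw [hgcd]; exact hd⟩, hgcd⟩
  · intro k hk
    simp only [Finset.mem_filter, Finset.mem_Icc] at hk
    exact Nat.mul_div_cancel' (hk.2 ▸ Nat.gcd_dvd_left k m)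
  · intro a ha
    exact Nat.mul_div_cancel_left a hdpos
  · intro k hk
    simp only [Finset.mem_filter, Finset.mem_Icc] at hk
    rw [Nat.mul_div_cancel' (hk.2 ▸ Nat.gcd_dvd_left k m)]

lemma Reg_eq_filter (n : ℕ) (hn : 0 < n) :
    Reg n = (Icc 1 n).filter (fun k => Nat.gcd k n ∈ unitaryDivisors n) := by
  ext k
  simp only [Reg, unitaryDivisors, Finset.mem_filter, Finset.mem_Icc, Nat.mem_divisors]
  constructor
  · rintro ⟨⟨hk1, hk2⟩, hreg⟩
    refine ⟨⟨hk1, hk2⟩, ⟨Nat.gcd_dvd_right k n, hn.ne'⟩, ?_⟩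
    exact (regular_iff_gcd_unitary hn hk1).mp hreg
  · rintro ⟨⟨hk1, hk2⟩, -, hcop⟩
    exact ⟨⟨hk1, hk2⟩, (regular_iff_gcd_unitary hn hk1).mpr hcop⟩

lemma mem_unitaryDivisors_div {n d : ℕ} (hn : 0 < n) (hd : d ∈ unitaryDivisors n) :
    n / d ∈ unitaryDivisors n := by
  simp only [unitaryDivisors, Finset.mem_filter, Nat.mem_divisors] at hd ⊢
  obtain ⟨⟨hdvd, hne⟩, hcop⟩ := hd
  refine ⟨⟨Nat.div_dvd_of_dvd hdvd, hne⟩, ?_⟩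
  rw [Nat.div_div_self hdvd hne]
  exact hcop.symm

lemma sum_unitaryDivisors_div {M : Type*} [AddCommMonoid M] (n : ℕ) (hn : 0 < n)
    (g : ℕ → M) :
    ∑ d ∈ unitaryDivisors n, g (n / d) = ∑ d ∈ unitaryDivisors n, g d := by
  refine Finset.sum_nbij' (fun d => n / d) (fun d => n / d) ?_ ?_ ?_ ?_ ?_
  · intro d hd; exact mem_unitaryDivisors_div hn hd
  · intro d hd; exact mem_unitaryDivisors_div hn hd
  · intro d hd
    simp only [unitaryDivisors, Finset.mem_filter, Nat.mem_divisors] at hd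
    exact Nat.div_div_self hd.1.1 hn.ne'
  · intro d hd
    simp only [unitaryDivisors, Finset.mem_filter, Nat.mem_divisors] at hd
    exact Nat.div_div_self hd.1.1 hn.ne'
  · intro d hd; rfl

lemma card_totatives (e : ℕ) :
    ((Icc 1 e).filter (fun a => a.Coprime e)).card = e.totient := by
  have h : (Icc 1 e).filter (fun a => a.Coprime e) =
      (Ico 1 (1 + e)).filter (fun x => e.Coprime x) := by
    rw [add_comm, Finset.Ico_add_one_right_eq_Icc]
    apply Finset.filter_congr
    intro x _
    exact Nat.coprime_comm
  rw [h, Nat.filter_coprime_Ico_eq_totient]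

lemma totient_eq_sum_moebius (m : ℕ) (hm : 0 < m) :
    (m.totient : ℤ) = ∑ e ∈ m.divisors, ArithmeticFunction.moebius (m / e) * (e : ℤ) := by
  have key := (ArithmeticFunction.sum_eq_iff_sum_smul_moebius_eq (R := ℤ)
      (f := fun x => (x.totient : ℤ)) (g := fun x => (x : ℤ))).mp ?_ m hm
  · rw [Nat.sum_divisorsAntidiagonal'
      (f := fun x y => ArithmeticFunction.moebius x • (y : ℤ))] at key
    rw [← key]
    exact (Finset.sum_congr rfl fun e _ => by rw [smul_eq_mul]).symm
  · intro x hx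
    exact_mod_cast congrArg (Nat.cast (R := ℤ)) (Nat.sum_totient x)

/-- The sum of `tan²(aπ/q)` over the totatives of `q`. -/
noncomputable def tanTot (q : ℕ) : ℝ :=
  ∑ a ∈ (Icc 1 q).filter (fun a => a.Coprime q), Real.tan (a * π / q) ^ 2

lemma arg_eq (m d a : ℕ) (hm : 0 < m) (hd : d ∣ m) (hd0 : 0 < d) :
    ((d * a : ℕ) : ℝ) * π / m = (a : ℝ) * π / ((m / d : ℕ) : ℝ) := by
  have he : (d * (m / d) : ℕ) = m := Nat.mul_div_cancel' hd
  have hmd0 : 0 < m / d := Nat.div_pos (Nat.le_of_dvd hm hd) hd0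
  have h1 : (m : ℝ) = (d : ℝ) * ((m / d : ℕ) : ℝ) := by exact_mod_cast he.symm
  have hdr : (d : ℝ) ≠ 0 := Nat.cast_ne_zero.mpr hd0.ne'
  have hmr : ((m / d : ℕ) : ℝ) ≠ 0 := Nat.cast_ne_zero.mpr hmd0.ne'
  rw [h1]
  push_cast
  field_simp

lemma inner_tan (m d : ℕ) (hm : 0 < m) (hd : d ∣ m) (hd0 : 0 < d) :
    ∑ a ∈ (Icc 1 (m / d)).filter (fun a => a.Coprime (m / d)),
      Real.tan (((d * a : ℕ) : ℝ) * π / m) ^ 2 = tanTot (m / d) := by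
  refine Finset.sum_congr rfl fun a _ => ?_
  rw [arg_eq m d a hm hd hd0]

lemma sum_div_tanTot (m : ℕ) (hm : 0 < m) (hodd : Odd m) :
    ∑ e ∈ m.divisors, tanTot e = (m : ℝ) ^ 2 - m := by
  have h0 : (Icc 1 m).filter (fun k => Nat.gcd k m ∈ m.divisors) = Icc 1 m :=
    Finset.filter_true_of_mem
      (fun k _ => Nat.mem_divisors.mpr ⟨Nat.gcd_dvd_right k m, hm.ne'⟩)
  have h1 := sum_gcd_fiber m hm m.divisors (fun d hd => (Nat.mem_divisors.mp hd).1)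
      (fun k => Real.tan ((k : ℝ) * π / m) ^ 2)
  rw [h0, sum_tan_Icc m hm hodd] at h1
  have h2 : ∀ d ∈ m.divisors,
      (∑ a ∈ (Icc 1 (m / d)).filter (fun a => a.Coprime (m / d)),
        Real.tan (((d * a : ℕ) : ℝ) * π / m) ^ 2) = tanTot (m / d) := fun d hd =>
    inner_tan m d hm (Nat.mem_divisors.mp hd).1 (Nat.pos_of_mem_divisors hd)
  rw [Finset.sum_congr rfl h2] at h1
  rw [← Nat.sum_div_divisors m tanTot]
  exact h1.symm

lemma tanTot_eq (m : ℕ) (hm : 0 < m) (hodd : Odd m) :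
    tanTot m = ∑ e ∈ m.divisors,
      ((ArithmeticFunction.moebius (m / e) : ℤ) : ℝ) * ((e : ℝ) ^ 2 - e) := by
  have hcl : ∀ a b : ℕ, a ∣ b → b ∈ {q : ℕ | Odd q} → a ∈ {q : ℕ | Odd q} := by
    intro a b hab hb
    simp only [Set.mem_setOf_eq] at hb ⊢
    rw [← Nat.not_even_iff_odd] at hb ⊢
    intro ha
    exact hb ((even_iff_two_dvd.mpr ((even_iff_two_dvd.mp ha).trans hab)))
  have key := (ArithmeticFunction.sum_eq_iff_sum_smul_moebius_eq_on (R := ℝ)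
      (f := tanTot) (g := fun q => (q : ℝ) ^ 2 - q) {q : ℕ | Odd q} hcl).mp
      (fun q hq hqs => sum_div_tanTot q hq hqs) m hm hodd
  rw [Nat.sum_divisorsAntidiagonal'
      (f := fun x y => ArithmeticFunction.moebius x • ((y : ℝ) ^ 2 - (y : ℝ)))] at key
  rw [← key]
  refine Finset.sum_congr rfl fun e _ => ?_
  rw [zsmul_eq_mul]

lemma tanTot_closed (m : ℕ) (hm : 0 < m) (hodd : Odd m) :
    tanTot m = ((phiInt 2 m : ℤ) : ℝ) - (m.totient : ℝ) := by
  rw [tanTot_eq m hm hodd]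
  have hsplit : ∑ e ∈ m.divisors,
      ((ArithmeticFunction.moebius (m / e) : ℤ) : ℝ) * ((e : ℝ) ^ 2 - e) =
      (∑ e ∈ m.divisors, ((ArithmeticFunction.moebius (m / e) : ℤ) : ℝ) * (e : ℝ) ^ 2) -
      ∑ e ∈ m.divisors, ((ArithmeticFunction.moebius (m / e) : ℤ) : ℝ) * (e : ℝ) := by
    rw [← Finset.sum_sub_distrib]
    exact Finset.sum_congr rfl fun e _ => by ring
  rw [hsplit]
  congr 1
  · rw [phiInt]
    push_cast
    rfl
  · exact_mod_cast (totient_eq_sum_moebius m hm).symm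

theorem sum_tan_sq_reg (n : ℕ) (hn : 1 ≤ n) (hodd : Odd n) :
    ∑ k ∈ Reg n, Real.tan (k * Real.pi / n) ^ 2 =
      (rhoInt 2 n : ℝ) - ((Reg n).card : ℝ) := by
  have hn0 : 0 < n := hn
  have hDdvd : ∀ d ∈ unitaryDivisors n, d ∣ n := fun d hd =>
    (Nat.mem_divisors.mp (Finset.mem_filter.mp hd).1).1
  have hDpos : ∀ d ∈ unitaryDivisors n, 0 < d := fun d hd =>
    Nat.pos_of_dvd_of_pos (hDdvd d hd) hn0
  have hOddDiv : ∀ d ∈ unitaryDivisors n, Odd (n / d) ∧ 0 < n / d := by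
    intro d hd
    have hdvd : n / d ∣ n := Nat.div_dvd_of_dvd (hDdvd d hd)
    constructor
    · rw [← Nat.not_even_iff_odd] at hodd ⊢
      intro ha
      exact hodd (even_iff_two_dvd.mpr ((even_iff_two_dvd.mp ha).trans hdvd))
    · exact Nat.div_pos (Nat.le_of_dvd hn0 (hDdvd d hd)) (hDpos d hd)
  -- partition of the sum
  have hpart := sum_gcd_fiber n hn0 (unitaryDivisors n) hDdvd
      (fun k => Real.tan ((k : ℝ) * π / n) ^ 2)
  rw [← Reg_eq_filter n hn0] at hpart
  have hpart2 : ∑ k ∈ Reg n, Real.tan ((k : ℝ) * π / n) ^ 2 =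
      ∑ d ∈ unitaryDivisors n, tanTot (n / d) := by
    rw [hpart]
    exact Finset.sum_congr rfl fun d hd =>
      inner_tan n d hn0 (hDdvd d hd) (hDpos d hd)
  -- partition of the cardinality
  have hcard := sum_gcd_fiber n hn0 (unitaryDivisors n) hDdvd (fun _ => (1 : ℕ))
  rw [← Reg_eq_filter n hn0] at hcard
  have hcard2 : (Reg n).card = ∑ d ∈ unitaryDivisors n, (n / d).totient := by
    rw [Finset.card_eq_sum_ones, hcard]
    exact Finset.sum_congr rfl fun d hd => by
      rw [← card_totatives (n / d), Finset.card_eq_sum_ones]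
  -- closed form
  have hclosed : ∑ d ∈ unitaryDivisors n, tanTot (n / d) =
      ∑ d ∈ unitaryDivisors n,
        (((phiInt 2 (n / d) : ℤ) : ℝ) - ((n / d).totient : ℝ)) :=
    Finset.sum_congr rfl fun d hd =>
      tanTot_closed (n / d) (hOddDiv d hd).2 (hOddDiv d hd).1
  have hrho : ∑ d ∈ unitaryDivisors n, ((phiInt 2 (n / d) : ℤ) : ℝ) =
      ((rhoInt 2 n : ℤ) : ℝ) := by
    rw [rhoInt]
    push_cast
    rw [sum_unitaryDivisors_div n hn0 (fun d => ((phiInt 2 d : ℤ) : ℝ))]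
  rw [hpart2, hclosed, Finset.sum_sub_distrib, hrho, hcard2]
  push_cast
  ring
end
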